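/- There is a constant c such that for every sequential regex formula γ that is synchronized for a set X ⊆ Vars, there exists a sequential vset-automaton A that is synchronized for X, satisfies ⟦A⟧(d) = ⟦γ⟧(d) for every document d, and has at most c·|γ| states and at most c·|γ| transitions, where |γ| is the length of γ. -/

import Mathlib

namespace Spanners

open scoped Classical

/-! ### Spans and mappings -/

abbrev Span := ℕ × ℕ

abbrev VMapping := ℕ → Option Span

def emptyMapping : VMapping := fun _ => none

def mapDom (μ : VMapping) : Set ℕ := {x | μ x ≠ none}

/-- Two mappings are compatible if they agree on every common variable. -/
def Compatible (μ1 μ2 : VMapping) : Prop :=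
  ∀ x s1 s2, μ1 x = some s1 → μ2 x = some s2 → s1 = s2

def DisjointDom (μ1 μ2 : VMapping) : Prop :=
  ∀ x, μ1 x = none ∨ μ2 x = none

def munion (μ1 μ2 : VMapping) : VMapping := fun x =>
  match μ1 x with
  | some s => some s
  | none => μ2 x

def minsert (x : ℕ) (s : Span) (μ : VMapping) : VMapping :=
  fun y => if y = x then some s else μ y

/-- Natural join of two sets of mappings. -/
def joinSet (S1 S2 : Set VMapping) : Set VMapping :=
  {μ | ∃ μ1 ∈ S1, ∃ μ2 ∈ S2, Compatible μ1 μ2 ∧ μ = munion μ1 μ2}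

/-- Difference of two sets of mappings. -/
def diffSet (S1 S2 : Set VMapping) : Set VMapping :=
  {μ1 | μ1 ∈ S1 ∧ ∀ μ2 ∈ S2, ¬ Compatible μ1 μ2}

/-- Restriction of a mapping to a set of variables. -/
noncomputable def restrictMap (μ : VMapping) (V : Set ℕ) : VMapping :=
  fun x => if x ∈ V then μ x else none

/-- Projection of a set of mappings to a set of variables. -/
def projSet (V : Set ℕ) (S : Set VMapping) : Set VMapping :=
  {μ' | ∃ μ ∈ S, μ' = restrictMap μ V}

/-! ### Regex formulas -/

inductive RGX (Sig : Type) where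
  | empty : RGX Sig
  | eps : RGX Sig
  | letter : Sig → RGX Sig
  | union : RGX Sig → RGX Sig → RGX Sig
  | concat : RGX Sig → RGX Sig → RGX Sig
  | star : RGX Sig → RGX Sig
  | bind : ℕ → RGX Sig → RGX Sig

variable {Sig : Type}

def RGX.vars : RGX Sig → Finset ℕ
  | .empty => ∅
  | .eps => ∅
  | .letter _ => ∅
  | .union a b => a.vars ∪ b.vars
  | .concat a b => a.vars ∪ b.vars
  | .star a => a.vars
  | .bind x a => insert x a.vars

def RGX.size : RGX Sig → ℕ
  | .empty => 1
  | .eps => 1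
  | .letter _ => 1
  | .union a b => a.size + b.size + 1
  | .concat a b => a.size + b.size + 1
  | .star a => a.size + 1
  | .bind _ a => a.size + 1

/-- The schemaless semantics `⟨α⟩(d)`: `RMatch α d i j μ` means `([i,j⟩, μ) ∈ ⟨α⟩(d)`. -/
inductive RMatch : RGX Sig → List Sig → ℕ → ℕ → VMapping → Prop where
  | eps {d : List Sig} {i : ℕ} (h1 : 1 ≤ i) (h2 : i ≤ d.length + 1) :
      RMatch .eps d i i emptyMapping
  | letter {d : List Sig} {i : ℕ} {σ : Sig} (h1 : 1 ≤ i) (h2 : d[i - 1]? = some σ) :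
      RMatch (.letter σ) d i (i + 1) emptyMapping
  | unionL {a b : RGX Sig} {d : List Sig} {i j : ℕ} {μ : VMapping}
      (h : RMatch a d i j μ) : RMatch (.union a b) d i j μ
  | unionR {a b : RGX Sig} {d : List Sig} {i j : ℕ} {μ : VMapping}
      (h : RMatch b d i j μ) : RMatch (.union a b) d i j μ
  | concat {a b : RGX Sig} {d : List Sig} {i k j : ℕ} {μ1 μ2 : VMapping}
      (h1 : RMatch a d i k μ1) (h2 : RMatch b d k j μ2) (hd : DisjointDom μ1 μ2) :
      RMatch (.concat a b) d i j (munion μ1 μ2)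
  | bind {x : ℕ} {a : RGX Sig} {d : List Sig} {i j : ℕ} {μ : VMapping}
      (h : RMatch a d i j μ) (hx : μ x = none) :
      RMatch (.bind x a) d i j (minsert x (i, j) μ)
  | starNil {a : RGX Sig} {d : List Sig} {i : ℕ} (h1 : 1 ≤ i) (h2 : i ≤ d.length + 1) :
      RMatch (.star a) d i i emptyMapping
  | starCons {a : RGX Sig} {d : List Sig} {i k j : ℕ} {μ1 μ2 : VMapping}
      (h1 : RMatch a d i k μ1) (h2 : RMatch (.star a) d k j μ2) (hd : DisjointDom μ1 μ2) :
      RMatch (.star a) d i j (munion μ1 μ2)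

/-- `⟦α⟧(d)`: mappings extracted with the full span. -/
def rgxSem (α : RGX Sig) (d : List Sig) : Set VMapping :=
  {μ | RMatch α d 1 (d.length + 1) μ}

/-- Sequential regex formulas. -/
def RGX.Sequential : RGX Sig → Prop
  | .empty => True
  | .eps => True
  | .letter _ => True
  | .union a b => a.Sequential ∧ b.Sequential
  | .concat a b => a.Sequential ∧ b.Sequential ∧ Disjoint a.vars b.vars
  | .star a => a.Sequential ∧ a.vars = ∅
  | .bind x a => a.Sequential ∧ x ∉ a.vars

/-- Variable-free words over the alphabet (built from ε, letters and concatenation). -/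
inductive RGX.IsWord : RGX Sig → Prop where
  | eps : RGX.IsWord .eps
  | letter (σ : Sig) : RGX.IsWord (.letter σ)
  | concat {a b : RGX Sig} : a.IsWord → b.IsWord → RGX.IsWord (.concat a b)

/-- Functional for a set `V` of variables. -/
inductive FunctionalFor : RGX Sig → Finset ℕ → Prop where
  | word {α : RGX Sig} (h : α.IsWord) : FunctionalFor α ∅
  | union {a b : RGX Sig} {V : Finset ℕ} (ha : FunctionalFor a V) (hb : FunctionalFor b V) :
      FunctionalFor (.union a b) V
  | concat {a b : RGX Sig} {V : Finset ℕ} (V1 : Finset ℕ) (hsub : V1 ⊆ V)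
      (ha : FunctionalFor a V1) (hb : FunctionalFor b (V \ V1)) :
      FunctionalFor (.concat a b) V
  | star {a : RGX Sig} (h : FunctionalFor a ∅) : FunctionalFor (.star a) ∅
  | bind {x : ℕ} {a : RGX Sig} {V : Finset ℕ} (h : FunctionalFor a (V.erase x)) :
      FunctionalFor (.bind x a) V

def RGX.Functional (α : RGX Sig) : Prop := FunctionalFor α α.vars

/-- Disjunctive functional regex formulas: finite disjunctions of functional regex formulas. -/
inductive DisjFunctional : RGX Sig → Prop where
  | base {γ : RGX Sig} (h : γ.Functional) : DisjFunctional γ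
  | union {a b : RGX Sig} (ha : DisjFunctional a) (hb : DisjFunctional b) :
      DisjFunctional (.union a b)

/-- Number of disjuncts of a (disjunctive) regex formula. -/
def countDisjuncts : RGX Sig → ℕ
  | .union a b => countDisjuncts a + countDisjuncts b
  | _ => 1

/-- Disjunction-free regex formulas. -/
def RGX.DisjFree : RGX Sig → Prop
  | .union _ _ => False
  | .concat a b => a.DisjFree ∧ b.DisjFree
  | .star a => a.DisjFree
  | .bind _ a => a.DisjFree
  | _ => True

/-- `γ` is synchronized for `x`: no subformula `γ1 ∨ γ2` contains `x`. -/
def RGX.SyncFor : RGX Sig → ℕ → Prop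
  | .union a b, x => (x ∉ a.vars ∧ x ∉ b.vars) ∧ a.SyncFor x ∧ b.SyncFor x
  | .concat a b, x => a.SyncFor x ∧ b.SyncFor x
  | .star a, x => a.SyncFor x
  | .bind _ a, x => a.SyncFor x
  | _, _ => True

/-- Concatenation of a list of regex formulas. -/
def concatList : List (RGX Sig) → RGX Sig
  | [] => .eps
  | [α] => α
  | α :: rest => .concat α (concatList rest)

/-- Disjunction of a list of regex formulas. -/
def disjList : List (RGX Sig) → RGX Sig
  | [] => .empty
  | [α] => α
  | α :: rest => .union α (disjList rest)

/-! ### vset-automata -/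

inductive VLabel (Sig : Type) where
  | eps : VLabel Sig
  | letter : Sig → VLabel Sig
  | openv : ℕ → VLabel Sig
  | closev : ℕ → VLabel Sig
deriving DecidableEq

structure VA (Sig : Type) [DecidableEq Sig] where
  q0 : ℕ
  F : Finset ℕ
  δ : Finset (ℕ × VLabel Sig × ℕ)

variable [DecidableEq Sig]

/-- The states of a VA: the initial state and all states mentioned in `F` or in transitions. -/
def statesOf (A : VA Sig) : Finset ℕ :=
  insert A.q0 (A.F ∪ A.δ.image (fun t => t.1) ∪ A.δ.image (fun t => t.2.2))

def labelVars : VLabel Sig → Finset ℕ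
  | .openv x => {x}
  | .closev x => {x}
  | _ => ∅

/-- `Vars(A)`: the variables mentioned in the transitions of `A`. -/
def varsOf (A : VA Sig) : Finset ℕ := A.δ.biUnion (fun t => labelVars t.2.1)

/-- Total size of a VA: number of states plus number of transitions. -/
def vaSize (A : VA Sig) : ℕ := (statesOf A).card + A.δ.card

/-- `A.PathFrom p ls q`: a path (run segment) from `p` to `q` with label sequence `ls`. -/
inductive VA.PathFrom (A : VA Sig) : ℕ → List (VLabel Sig) → ℕ → Prop where
  | nil (q : ℕ) : VA.PathFrom A q [] q
  | cons {p q r : ℕ} {l : VLabel Sig} {ls : List (VLabel Sig)}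
      (h : (p, l, q) ∈ A.δ) (htail : VA.PathFrom A q ls r) : VA.PathFrom A p (l :: ls) r

/-- The word (document) read by a sequence of labels. -/
def readWord : List (VLabel Sig) → List Sig :=
  List.filterMap fun l => match l with
    | VLabel.letter σ => some σ
    | _ => none

def isLetterL : VLabel Sig → Bool
  | .letter _ => true
  | _ => false

/-- The current position in the document just before executing the `k`-th label. -/
def posAt (ls : List (VLabel Sig)) (k : ℕ) : ℕ := 1 + (ls.take k).countP isLetterL

/-- Validity of a run, given by its label sequence. -/
def ValidLabels (ls : List (VLabel Sig)) : Prop :=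
  ∀ x : ℕ,
    ls.count (VLabel.openv x) ≤ 1 ∧
    ls.count (VLabel.closev x) ≤ 1 ∧
    ((VLabel.openv x) ∈ ls ↔ (VLabel.closev x) ∈ ls) ∧
    ∀ i j : ℕ, ls[i]? = some (VLabel.openv x) → ls[j]? = some (VLabel.closev x) →
      posAt ls i ≤ posAt ls j

/-- The mapping `μ_ρ` extracted from a (valid accepting) run with label sequence `ls`. -/
def runMapping (ls : List (VLabel Sig)) : VMapping := fun x =>
  if (VLabel.openv x) ∈ ls then
    some (posAt ls (ls.idxOf (VLabel.openv x)), posAt ls (ls.idxOf (VLabel.closev x)))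
  else none

/-- `ls` is the label sequence of an accepting run of `A`. -/
def AcceptsWith (A : VA Sig) (ls : List (VLabel Sig)) : Prop :=
  ∃ qf, VA.PathFrom A A.q0 ls qf ∧ qf ∈ A.F

/-- `⟦A⟧(d)`. -/
def vaSem (A : VA Sig) (d : List Sig) : Set VMapping :=
  {μ | ∃ ls, AcceptsWith A ls ∧ readWord ls = d ∧ ValidLabels ls ∧ μ = runMapping ls}

/-- A VA is sequential if all of its accepting runs are valid. -/
def VA.Sequential (A : VA Sig) : Prop := ∀ ls, AcceptsWith A ls → ValidLabels ls

/-- A run from the initial state to `q` that is a prefix of an accepting run. -/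
def PrefixRun (A : VA Sig) (ls : List (VLabel Sig)) (q : ℕ) : Prop :=
  VA.PathFrom A A.q0 ls q ∧ ∃ ls' qf, VA.PathFrom A q ls' qf ∧ qf ∈ A.F

/-- `A` is semi-functional for the variable `x`: no state has extended configuration `d`. -/
def SemiFunctionalFor (A : VA Sig) (x : ℕ) : Prop :=
  ¬ ∃ q ls1 ls2, PrefixRun A ls1 q ∧ PrefixRun A ls2 q ∧
      (VLabel.closev x) ∈ ls1 ∧ (VLabel.openv x) ∉ ls2

def SemiFunctionalForSet (A : VA Sig) (X : Finset ℕ) : Prop :=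
  ∀ x ∈ X, SemiFunctionalFor A x

/-- Functional VA: sequential, and every accepting run opens and closes every variable. -/
def FunctionalVA (A : VA Sig) : Prop :=
  A.Sequential ∧ ∀ ls, AcceptsWith A ls → ∀ x ∈ varsOf A,
    (VLabel.openv x) ∈ ls ∧ (VLabel.closev x) ∈ ls

/-- `l` has a unique target state in `A`. -/
def UniqueTarget (A : VA Sig) (l : VLabel Sig) : Prop :=
  ∃ qt : ℕ, ∀ p q : ℕ, (p, l, q) ∈ A.δ → q = qt

/-- `A` is synchronized for the variable `x`. -/
def SyncForVA (A : VA Sig) (x : ℕ) : Prop :=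
  UniqueTarget A (VLabel.openv x) ∧ UniqueTarget A (VLabel.closev x) ∧
    ((∀ ls, AcceptsWith A ls → (VLabel.openv x) ∈ ls ∧ (VLabel.closev x) ∈ ls) ∨
     (∀ ls, AcceptsWith A ls → (VLabel.openv x) ∉ ls ∧ (VLabel.closev x) ∉ ls))

/-- `A` is the disjunctive functional VA with functional components `parts`. -/
def DisjFunctionalVAWith (A : VA Sig) (parts : List (VA Sig)) : Prop :=
  (∀ B ∈ parts, FunctionalVA B) ∧
  (parts.Pairwise fun B C => Disjoint (statesOf B) (statesOf C)) ∧
  (∀ B ∈ parts, A.q0 ∉ statesOf B) ∧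
  A.F = parts.foldr (fun B s => B.F ∪ s) (∅ : Finset ℕ) ∧
  A.δ = (parts.map (fun B => (A.q0, (VLabel.eps : VLabel Sig), B.q0))).toFinset
        ∪ parts.foldr (fun B s => B.δ ∪ s) (∅ : Finset (ℕ × VLabel Sig × ℕ))

def DisjFunctionalVA (A : VA Sig) : Prop := ∃ parts, DisjFunctionalVAWith A parts

/-! ### 3CNF formulas -/

/-- A 3CNF clause over `n` Boolean variables: a triple of literals; `(i, true)` is `xᵢ`,
`(i, false)` is `¬xᵢ`. -/
def Clause3 (n : ℕ) : Type := (Fin n × Bool) × (Fin n × Bool) × (Fin n × Bool)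

def litsOf {n : ℕ} (c : Clause3 n) : List (Fin n × Bool) := [c.1, c.2.1, c.2.2]

def clauseSat {n : ℕ} (τ : Fin n → Bool) (c : Clause3 n) : Prop :=
  ∃ l ∈ litsOf c, τ l.1 = l.2

def Sat3 {n m : ℕ} (φ : Fin m → Clause3 n) : Prop :=
  ∃ τ : Fin n → Bool, ∀ j, clauseSat τ (φ j)

end Spanners

namespace Spanners

variable {Sig : Type} [DecidableEq Sig]

set_option linter.unusedSectionVars false
set_option maxHeartbeats 1000000

/-! ### Auxiliary development for statement16 -/

/-- Paths over a raw transition set. -/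
inductive PathD (δ : Finset (ℕ × VLabel Sig × ℕ)) : ℕ → List (VLabel Sig) → ℕ → Prop where
  | nil (q : ℕ) : PathD δ q [] q
  | cons {p q r : ℕ} {l : VLabel Sig} {ls : List (VLabel Sig)}
      (h : (p, l, q) ∈ δ) (htail : PathD δ q ls r) : PathD δ p (l :: ls) r

lemma PathD.mono {δ δ' : Finset (ℕ × VLabel Sig × ℕ)} (hsub : δ ⊆ δ')
    {p q : ℕ} {ls : List (VLabel Sig)} (h : PathD δ p ls q) : PathD δ' p ls q := by
  induction h with
  | nil q => exact .nil q
  | cons h _ ih => exact .cons (hsub h) ih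

lemma PathD.append {δ : Finset (ℕ × VLabel Sig × ℕ)} {p q r : ℕ}
    {ls1 ls2 : List (VLabel Sig)} (h1 : PathD δ p ls1 q) (h2 : PathD δ q ls2 r) :
    PathD δ p (ls1 ++ ls2) r := by
  induction h1 with
  | nil _ => exact h2
  | cons h _ ih => exact .cons h (ih h2)

lemma pathfrom_iff_pathd (A : VA Sig) (p q : ℕ) (ls : List (VLabel Sig)) :
    VA.PathFrom A p ls q ↔ PathD A.δ p ls q := by
  constructor
  · intro h; induction h with
    | nil q => exact .nil q
    | cons h _ ih => exact .cons h ih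
  · intro h; induction h with
    | nil q => exact .nil q
    | cons h _ ih => exact .cons h ih

/-- Labels occurring along a path occur in the transition set. -/
lemma PathD.labels_mem {δ : Finset (ℕ × VLabel Sig × ℕ)} {p q : ℕ} {ls : List (VLabel Sig)}
    (h : PathD δ p ls q) : ∀ l ∈ ls, ∃ p' q', (p', l, q') ∈ δ := by
  induction h with
  | nil _ => intro l hl; simp at hl
  | cons h _ ih =>
      intro l' hl'
      rcases List.mem_cons.1 hl' with rfl | hl'
      · exact ⟨_, _, h⟩
      · exact ih l' hl'

/-- The exact label sequences produced by the Thompson-style automaton of a regex. -/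
inductive TrA : RGX Sig → List (VLabel Sig) → Prop where
  | eps : TrA .eps [.eps]
  | letter (σ : Sig) : TrA (.letter σ) [.letter σ]
  | unionL {a b : RGX Sig} {ls : List (VLabel Sig)} :
      TrA a ls → TrA (.union a b) (.eps :: ls ++ [.eps])
  | unionR {a b : RGX Sig} {ls : List (VLabel Sig)} :
      TrA b ls → TrA (.union a b) (.eps :: ls ++ [.eps])
  | concat {a b : RGX Sig} {ls1 ls2 : List (VLabel Sig)} :
      TrA a ls1 → TrA b ls2 → TrA (.concat a b) (.eps :: ls1 ++ .eps :: ls2 ++ [.eps])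
  | starNil {a : RGX Sig} : TrA (.star a) [.eps]
  | starCons {a : RGX Sig} {ls1 ls2 : List (VLabel Sig)} :
      TrA a ls1 → TrA (.star a) ls2 → TrA (.star a) (.eps :: ls1 ++ ls2)
  | bind {x : ℕ} {a : RGX Sig} {ls : List (VLabel Sig)} :
      TrA a ls → TrA (.bind x a) (.openv x :: ls ++ [.closev x])

lemma TrA.ne_nil {γ : RGX Sig} {ls : List (VLabel Sig)} (h : TrA γ ls) : ls ≠ [] := by
  cases h <;> simp

/-! ### Positions and extracted mappings -/

def lcnt (ls : List (VLabel Sig)) : ℕ := ls.countP isLetterL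

def posA (i : ℕ) (ls : List (VLabel Sig)) (k : ℕ) : ℕ := i + lcnt (ls.take k)

def tMap (i : ℕ) (ls : List (VLabel Sig)) : VMapping := fun x =>
  if (VLabel.openv x) ∈ ls then
    some (posA i ls (ls.idxOf (VLabel.openv x)), posA i ls (ls.idxOf (VLabel.closev x)))
  else none

lemma runMapping_eq_tMap (ls : List (VLabel Sig)) : runMapping ls = tMap 1 ls := rfl

@[simp] lemma isLetterL_eps : isLetterL (VLabel.eps : VLabel Sig) = false := rfl
@[simp] lemma isLetterL_openv (x : ℕ) : isLetterL (VLabel.openv x : VLabel Sig) = false := rfl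
@[simp] lemma isLetterL_closev (x : ℕ) : isLetterL (VLabel.closev x : VLabel Sig) = false := rfl
@[simp] lemma isLetterL_letter (σ : Sig) : isLetterL (VLabel.letter σ) = true := rfl

@[simp] lemma lcnt_nil : lcnt ([] : List (VLabel Sig)) = 0 := rfl

lemma lcnt_cons (l : VLabel Sig) (ls : List (VLabel Sig)) :
    lcnt (l :: ls) = lcnt ls + (if isLetterL l then 1 else 0) := List.countP_cons

@[simp] lemma lcnt_eps_cons (ls : List (VLabel Sig)) :
    lcnt (VLabel.eps :: ls) = lcnt ls := by simp [lcnt_cons]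

@[simp] lemma lcnt_openv_cons (x : ℕ) (ls : List (VLabel Sig)) :
    lcnt (VLabel.openv x :: ls) = lcnt ls := by simp [lcnt_cons]

@[simp] lemma lcnt_closev_cons (x : ℕ) (ls : List (VLabel Sig)) :
    lcnt (VLabel.closev x :: ls) = lcnt ls := by simp [lcnt_cons]

lemma lcnt_append (l1 l2 : List (VLabel Sig)) : lcnt (l1 ++ l2) = lcnt l1 + lcnt l2 :=
  List.countP_append

@[simp] lemma lcnt_eps_singleton : lcnt ([VLabel.eps] : List (VLabel Sig)) = 0 := rfl
@[simp] lemma lcnt_closev_singleton (x : ℕ) : lcnt ([VLabel.closev x] : List (VLabel Sig)) = 0 := rfl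

@[simp] lemma lcnt_append_eps (ls : List (VLabel Sig)) :
    lcnt (ls ++ [VLabel.eps]) = lcnt ls := by simp [lcnt_append]

@[simp] lemma lcnt_append_closev (x : ℕ) (ls : List (VLabel Sig)) :
    lcnt (ls ++ [VLabel.closev x]) = lcnt ls := by simp [lcnt_append]

/-! readWord lemmas -/

@[simp] lemma readWord_nil : readWord ([] : List (VLabel Sig)) = [] := rfl
@[simp] lemma readWord_eps_cons (ls : List (VLabel Sig)) :
    readWord (VLabel.eps :: ls) = readWord ls := rfl
@[simp] lemma readWord_openv_cons (x : ℕ) (ls : List (VLabel Sig)) :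
    readWord (VLabel.openv x :: ls) = readWord ls := rfl
@[simp] lemma readWord_closev_cons (x : ℕ) (ls : List (VLabel Sig)) :
    readWord (VLabel.closev x :: ls) = readWord ls := rfl
@[simp] lemma readWord_letter_cons (σ : Sig) (ls : List (VLabel Sig)) :
    readWord (VLabel.letter σ :: ls) = σ :: readWord ls := rfl
@[simp] lemma readWord_append (l1 l2 : List (VLabel Sig)) :
    readWord (l1 ++ l2) = readWord l1 ++ readWord l2 := List.filterMap_append

lemma readWord_length (ls : List (VLabel Sig)) : (readWord ls).length = lcnt ls := by
  induction ls with
  | nil => rfl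
  | cons l ls ih => cases l <;> simp [ih, lcnt_cons]

/-! posA lemmas -/

lemma posA_mono (i : ℕ) (ls : List (VLabel Sig)) {k k' : ℕ} (h : k ≤ k') :
    posA i ls k ≤ posA i ls k' := by
  have hsub : List.Sublist (ls.take k) (ls.take k') := by
    rw [show ls.take k = (ls.take k').take k by rw [List.take_take, min_eq_left h]]
    exact List.take_sublist _ _
  exact Nat.add_le_add_left (List.Sublist.countP_le hsub) _

@[simp] lemma posA_zero (i : ℕ) (ls : List (VLabel Sig)) : posA i ls 0 = i := by
  simp [posA]

lemma posA_eps_cons (i : ℕ) (ls : List (VLabel Sig)) (k : ℕ) :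
    posA i (VLabel.eps :: ls) (k + 1) = posA i ls k := by
  simp [posA]

lemma posA_openv_cons (i x : ℕ) (ls : List (VLabel Sig)) (k : ℕ) :
    posA i (VLabel.openv x :: ls) (k + 1) = posA i ls k := by
  simp [posA]

lemma posA_append_left (i : ℕ) (l1 l2 : List (VLabel Sig)) {k : ℕ} (h : k ≤ l1.length) :
    posA i (l1 ++ l2) k = posA i l1 k := by
  simp [posA, List.take_append_of_le_length h]

lemma posA_append_right (i : ℕ) (l1 l2 : List (VLabel Sig)) (k : ℕ) :
    posA i (l1 ++ l2) (l1.length + k) = posA (i + lcnt l1) l2 k := by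
  simp [posA, List.take_append, lcnt_append, List.take_of_length_le]; omega

lemma posA_of_le_length (i : ℕ) (l1 l2 : List (VLabel Sig)) {k k' : ℕ}
    (h : l1.length ≤ k) (h' : l1.length ≤ k') (hl : lcnt l2 = 0) :
    posA i (l1 ++ l2) k = posA i (l1 ++ l2) k' := by
  have h1 : ∀ m, l1.length ≤ m → lcnt ((l1 ++ l2).take m) = lcnt l1 := by
    intro m hm
    have : (l1 ++ l2).take m = l1 ++ l2.take (m - l1.length) := by
      rw [show m = l1.length + (m - l1.length) by omega, List.take_append]
      simp
    rw [this, lcnt_append]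
    have : lcnt (l2.take (m - l1.length)) ≤ lcnt l2 :=
      List.Sublist.countP_le (List.take_sublist _ _)
    omega
  simp [posA, h1 _ h, h1 _ h']

lemma posA_length (i : ℕ) (ls : List (VLabel Sig)) : posA i ls ls.length = i + lcnt ls := by
  simp [posA]

lemma posA_singleton_nonletter (i k : ℕ) (l : VLabel Sig) (h : isLetterL l = false) :
    posA i [l] k = i := by
  have h0 : lcnt (List.take k [l]) = 0 :=
    Nat.le_zero.1 (le_trans (List.Sublist.countP_le (List.take_sublist _ _))
      (by simp [lcnt, List.countP_cons, h]))
  simp [posA, h0]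

lemma tMap_eq_of_mem {x : ℕ} (i : ℕ) {ls : List (VLabel Sig)} (h : (VLabel.openv x) ∈ ls) :
    tMap i ls x = some (posA i ls (ls.idxOf (VLabel.openv x)),
      posA i ls (ls.idxOf (VLabel.closev x))) := if_pos h

lemma tMap_eq_of_not_mem {x : ℕ} (i : ℕ) {ls : List (VLabel Sig)}
    (h : (VLabel.openv x) ∉ ls) : tMap i ls x = none := if_neg h

lemma munion_some {μ1 μ2 : VMapping} {x : ℕ} {s : Span} (h : μ1 x = some s) :
    munion μ1 μ2 x = some s := by simp [munion, h]

lemma munion_none {μ1 μ2 : VMapping} {x : ℕ} (h : μ1 x = none) :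
    munion μ1 μ2 x = μ2 x := by simp [munion, h]

lemma munion_empty_empty : munion emptyMapping emptyMapping = emptyMapping := by
  funext x; rfl

lemma tMap_novars {i : ℕ} {ls : List (VLabel Sig)} (h : ∀ x, (VLabel.openv x) ∉ ls) :
    tMap i ls = emptyMapping := funext fun x => if_neg (h x)

lemma disj_tMap {ls1 ls2 : List (VLabel Sig)} {i j : ℕ}
    (hd : ∀ x, (VLabel.openv x) ∈ ls1 → (VLabel.openv x) ∉ ls2) :
    DisjointDom (tMap i ls1) (tMap j ls2) := by
  intro x
  by_cases h : (VLabel.openv x) ∈ ls1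
  · exact Or.inr (tMap_eq_of_not_mem _ (hd x h))
  · exact Or.inl (tMap_eq_of_not_mem _ h)

lemma tMap_eps_cons (i : ℕ) (ls : List (VLabel Sig)) :
    tMap i (VLabel.eps :: ls) = tMap i ls := by
  funext x
  by_cases h : (VLabel.openv x) ∈ ls
  · rw [tMap_eq_of_mem i (by simp [h] : (VLabel.openv x) ∈ VLabel.eps :: ls),
      tMap_eq_of_mem i h,
      List.idxOf_cons_ne _ (by simp : (VLabel.eps : VLabel Sig) ≠ VLabel.openv x),
      List.idxOf_cons_ne _ (by simp : (VLabel.eps : VLabel Sig) ≠ VLabel.closev x),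
      posA_eps_cons, posA_eps_cons]
  · rw [tMap_eq_of_not_mem i (by simp [h]), tMap_eq_of_not_mem i h]

lemma tMap_append_eps (i : ℕ) (ls : List (VLabel Sig)) :
    tMap i (ls ++ [VLabel.eps]) = tMap i ls := by
  funext x
  by_cases h : (VLabel.openv x) ∈ ls
  · rw [tMap_eq_of_mem i (by simp [h] : (VLabel.openv x) ∈ ls ++ [VLabel.eps]),
      tMap_eq_of_mem i h, List.idxOf_append_of_mem h,
      posA_append_left i ls _ (le_of_lt (List.idxOf_lt_length_iff.2 h))]
    by_cases hc : (VLabel.closev x) ∈ ls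
    · rw [List.idxOf_append_of_mem hc,
        posA_append_left i ls _ (le_of_lt (List.idxOf_lt_length_iff.2 hc))]
    · rw [List.idxOf_append_of_notMem hc, posA_append_right,
        posA_singleton_nonletter _ _ _ (by simp), List.idxOf_eq_length_iff.2 hc, posA_length]
  · rw [tMap_eq_of_not_mem i (by simp [h]), tMap_eq_of_not_mem i h]

lemma tMap_append (i : ℕ) {ls1 ls2 : List (VLabel Sig)}
    (hb : ∀ x, (VLabel.openv x) ∈ ls1 ↔ (VLabel.closev x) ∈ ls1)
    (hd : ∀ x, ((VLabel.openv x) ∈ ls1 ∨ (VLabel.closev x) ∈ ls1) →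
        (VLabel.openv x) ∉ ls2 ∧ (VLabel.closev x) ∉ ls2) :
    tMap i (ls1 ++ ls2) = munion (tMap i ls1) (tMap (i + lcnt ls1) ls2) := by
  funext x
  by_cases h1 : (VLabel.openv x) ∈ ls1
  · have hc1 : (VLabel.closev x) ∈ ls1 := (hb x).1 h1
    rw [munion_some (tMap_eq_of_mem i h1),
      tMap_eq_of_mem i (by simp [h1] : (VLabel.openv x) ∈ ls1 ++ ls2),
      List.idxOf_append_of_mem h1, List.idxOf_append_of_mem hc1,
      posA_append_left i ls1 _ (le_of_lt (List.idxOf_lt_length_iff.2 h1)),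
      posA_append_left i ls1 _ (le_of_lt (List.idxOf_lt_length_iff.2 hc1))]
  · rw [munion_none (tMap_eq_of_not_mem i h1)]
    by_cases h2 : (VLabel.openv x) ∈ ls2
    · have hc1' : (VLabel.closev x) ∉ ls1 := fun hcc => (hd x (Or.inr hcc)).1 h2
      rw [tMap_eq_of_mem i (by simp [h2] : (VLabel.openv x) ∈ ls1 ++ ls2),
        tMap_eq_of_mem _ h2, List.idxOf_append_of_notMem h1,
        List.idxOf_append_of_notMem hc1', posA_append_right, posA_append_right]
    · rw [tMap_eq_of_not_mem i (by simp [h1, h2]), tMap_eq_of_not_mem _ h2]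

lemma tMap_bind (i x : ℕ) {ls : List (VLabel Sig)}
    (ho : (VLabel.openv x) ∉ ls) (hc : (VLabel.closev x) ∉ ls)
    (hb : ∀ y, (VLabel.openv y) ∈ ls ↔ (VLabel.closev y) ∈ ls) :
    tMap i (VLabel.openv x :: ls ++ [VLabel.closev x]) =
      minsert x (i, i + lcnt ls) (tMap i ls) := by
  rw [List.cons_append]
  funext y
  by_cases hxy : y = x
  · subst hxy
    have hcL : (VLabel.closev y) ∉ ls ++ []
      := by simp [hc]
    have e1 : (VLabel.openv y :: (ls ++ [VLabel.closev y])).idxOf (VLabel.openv y) = 0 := by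
      simp
    have e2 : (VLabel.openv y :: (ls ++ [VLabel.closev y])).idxOf (VLabel.closev y)
        = ls.length + 1 := by
      rw [List.idxOf_cons_ne _ (by simp : (VLabel.openv y : VLabel Sig) ≠ VLabel.closev y),
        List.idxOf_append_of_notMem hc]
      simp
    rw [tMap_eq_of_mem i (by simp), e1, e2, posA_zero]
    have e3 : posA i (VLabel.openv y :: (ls ++ [VLabel.closev y])) (ls.length + 1)
        = i + lcnt ls := by
      have : posA i (VLabel.openv y :: (ls ++ [VLabel.closev y])) (ls.length + 1)
          = posA i (ls ++ [VLabel.closev y]) ls.length := by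
        simp [posA, List.take_append_of_le_length (le_refl ls.length)]
      rw [this, posA_append_left i ls _ (le_refl _), posA_length]
    rw [e3]
    simp [minsert]
  · have hne_o : (VLabel.openv x : VLabel Sig) ≠ VLabel.openv y := by simp [Ne.symm hxy]
    have hne_c : (VLabel.openv x : VLabel Sig) ≠ VLabel.closev y := by simp
    have hne_oc : (VLabel.openv y : VLabel Sig) ≠ VLabel.closev x := by simp
    have hne_cc : (VLabel.closev y : VLabel Sig) ≠ VLabel.closev x := by simp [hxy]
    by_cases hoy : (VLabel.openv y) ∈ ls
    · have hcy : (VLabel.closev y) ∈ ls := (hb y).1 hoy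
      have e1 : (VLabel.openv x :: (ls ++ [VLabel.closev x])).idxOf (VLabel.openv y)
          = ls.idxOf (VLabel.openv y) + 1 := by
        rw [List.idxOf_cons_ne _ hne_o, List.idxOf_append_of_mem hoy]
      have e2 : (VLabel.openv x :: (ls ++ [VLabel.closev x])).idxOf (VLabel.closev y)
          = ls.idxOf (VLabel.closev y) + 1 := by
        rw [List.idxOf_cons_ne _ hne_c, List.idxOf_append_of_mem hcy]
      rw [tMap_eq_of_mem i (by simp [hoy]), e1, e2, posA_openv_cons, posA_openv_cons,
        posA_append_left i ls _ (le_of_lt (List.idxOf_lt_length_iff.2 hoy)),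
        posA_append_left i ls _ (le_of_lt (List.idxOf_lt_length_iff.2 hcy))]
      rw [show minsert x (i, i + lcnt ls) (tMap i ls) y = tMap i ls y by simp [minsert, hxy],
        tMap_eq_of_mem i hoy]
    · have : (VLabel.openv y) ∉ VLabel.openv x :: (ls ++ [VLabel.closev x]) := by
        simp [hoy, hxy]
      rw [tMap_eq_of_not_mem i this,
        show minsert x (i, i + lcnt ls) (tMap i ls) y = tMap i ls y by simp [minsert, hxy],
        tMap_eq_of_not_mem i hoy]

/-! ### Well-formedness of trace label sequences -/

structure GoodT (vs : Finset ℕ) (ls : List (VLabel Sig)) : Prop where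
  openVars : ∀ x, (VLabel.openv x) ∈ ls → x ∈ vs
  closeVars : ∀ x, (VLabel.closev x) ∈ ls → x ∈ vs
  openCount : ∀ x, ls.count (VLabel.openv x) ≤ 1
  closeCount : ∀ x, ls.count (VLabel.closev x) ≤ 1
  bal : ∀ x, ((VLabel.openv x) ∈ ls ↔ (VLabel.closev x) ∈ ls)
  order : ∀ x, (VLabel.openv x) ∈ ls →
    ls.idxOf (VLabel.openv x) ≤ ls.idxOf (VLabel.closev x)

lemma GoodT.mono {vs vs' : Finset ℕ} {ls : List (VLabel Sig)} (h : GoodT vs ls)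
    (hsub : vs ⊆ vs') : GoodT vs' ls :=
  ⟨fun x hx => hsub (h.openVars x hx), fun x hx => hsub (h.closeVars x hx),
   h.openCount, h.closeCount, h.bal, h.order⟩

lemma GoodT.novars {vs : Finset ℕ} {ls : List (VLabel Sig)}
    (h : ∀ x, (VLabel.openv x) ∉ ls ∧ (VLabel.closev x) ∉ ls) : GoodT vs ls := by
  refine ⟨fun x hx => absurd hx (h x).1, fun x hx => absurd hx (h x).2,
    fun x => ?_, fun x => ?_, fun x => ?_, fun x hx => absurd hx (h x).1⟩
  · simp [List.count_eq_zero.2 (h x).1]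
  · simp [List.count_eq_zero.2 (h x).2]
  · simp [(h x).1, (h x).2]

lemma GoodT.epsCons {vs : Finset ℕ} {ls : List (VLabel Sig)} (h : GoodT vs ls) :
    GoodT vs (VLabel.eps :: ls) := by
  constructor
  · intro x hx; exact h.openVars x (by simpa using hx)
  · intro x hx; exact h.closeVars x (by simpa using hx)
  · intro x; simpa [List.count_cons] using h.openCount x
  · intro x; simpa [List.count_cons] using h.closeCount x
  · intro x; simpa using h.bal x
  · intro x hx
    have hx' : (VLabel.openv x) ∈ ls := by simpa using hx
    rw [List.idxOf_cons_ne _ (by simp : (VLabel.eps : VLabel Sig) ≠ VLabel.openv x),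
      List.idxOf_cons_ne _ (by simp : (VLabel.eps : VLabel Sig) ≠ VLabel.closev x)]
    exact Nat.succ_le_succ (h.order x hx')

lemma GoodT.epsSnoc {vs : Finset ℕ} {ls : List (VLabel Sig)} (h : GoodT vs ls) :
    GoodT vs (ls ++ [VLabel.eps]) := by
  constructor
  · intro x hx; exact h.openVars x (by simpa using hx)
  · intro x hx; exact h.closeVars x (by simpa using hx)
  · intro x; simpa [List.count_append] using h.openCount x
  · intro x; simpa [List.count_append] using h.closeCount x
  · intro x; simpa using h.bal x
  · intro x hx
    have hx' : (VLabel.openv x) ∈ ls := by simpa using hx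
    have hc' : (VLabel.closev x) ∈ ls := (h.bal x).1 hx'
    rw [List.idxOf_append_of_mem hx', List.idxOf_append_of_mem hc']
    exact h.order x hx'

lemma GoodT.append {vs1 vs2 : Finset ℕ} {ls1 ls2 : List (VLabel Sig)}
    (h1 : GoodT vs1 ls1) (h2 : GoodT vs2 ls2) (hd : Disjoint vs1 vs2) :
    GoodT (vs1 ∪ vs2) (ls1 ++ ls2) := by
  have key : ∀ x, x ∈ vs1 → x ∉ vs2 := fun x a b => (Finset.disjoint_left.1 hd) a b
  have oo : ∀ x, (VLabel.openv x) ∈ ls1 → (VLabel.openv x) ∉ ls2 :=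
    fun x m1 m2 => key x (h1.openVars x m1) (h2.openVars x m2)
  have oc : ∀ x, (VLabel.openv x) ∈ ls1 → (VLabel.closev x) ∉ ls2 :=
    fun x m1 m2 => key x (h1.openVars x m1) (h2.closeVars x m2)
  have co : ∀ x, (VLabel.closev x) ∈ ls1 → (VLabel.openv x) ∉ ls2 :=
    fun x m1 m2 => key x (h1.closeVars x m1) (h2.openVars x m2)
  have cc : ∀ x, (VLabel.closev x) ∈ ls1 → (VLabel.closev x) ∉ ls2 :=
    fun x m1 m2 => key x (h1.closeVars x m1) (h2.closeVars x m2)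
  constructor
  · intro x hx
    rcases List.mem_append.1 hx with h | h
    · exact Finset.mem_union_left _ (h1.openVars x h)
    · exact Finset.mem_union_right _ (h2.openVars x h)
  · intro x hx
    rcases List.mem_append.1 hx with h | h
    · exact Finset.mem_union_left _ (h1.closeVars x h)
    · exact Finset.mem_union_right _ (h2.closeVars x h)
  · intro x
    rw [List.count_append]
    by_cases m1 : (VLabel.openv x) ∈ ls1
    · rw [List.count_eq_zero.2 (oo x m1)]
      simpa using h1.openCount x
    · rw [List.count_eq_zero.2 m1]
      simpa using h2.openCount x
  · intro x
    rw [List.count_append]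
    by_cases m1 : (VLabel.closev x) ∈ ls1
    · rw [List.count_eq_zero.2 (cc x m1)]
      simpa using h1.closeCount x
    · rw [List.count_eq_zero.2 m1]
      simpa using h2.closeCount x
  · intro x
    simp only [List.mem_append]
    constructor
    · rintro (h | h)
      · exact Or.inl ((h1.bal x).1 h)
      · exact Or.inr ((h2.bal x).1 h)
    · rintro (h | h)
      · exact Or.inl ((h1.bal x).2 h)
      · exact Or.inr ((h2.bal x).2 h)
  · intro x hx
    rcases List.mem_append.1 hx with h | h
    · have hc : (VLabel.closev x) ∈ ls1 := (h1.bal x).1 h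
      rw [List.idxOf_append_of_mem h, List.idxOf_append_of_mem hc]
      exact h1.order x h
    · have ho1 : (VLabel.openv x) ∉ ls1 := fun m => oo x m h
      have hc1 : (VLabel.closev x) ∉ ls1 := fun m => co x m h
      rw [List.idxOf_append_of_notMem ho1, List.idxOf_append_of_notMem hc1]
      exact Nat.add_le_add_left (h2.order x h) _

lemma GoodT.bindWrap {vs : Finset ℕ} {ls : List (VLabel Sig)} (x : ℕ) (h : GoodT vs ls)
    (hx : x ∉ vs) :
    GoodT (insert x vs) (VLabel.openv x :: (ls ++ [VLabel.closev x])) := by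
  have ho : (VLabel.openv x) ∉ ls := fun m => hx (h.openVars x m)
  have hc : (VLabel.closev x) ∉ ls := fun m => hx (h.closeVars x m)
  constructor
  · intro y hy
    rcases List.mem_cons.1 hy with h' | h'
    · simp at h'; simp [h']
    · rcases List.mem_append.1 h' with h'' | h''
      · exact Finset.mem_insert_of_mem (h.openVars y h'')
      · simp at h''
  · intro y hy
    rcases List.mem_cons.1 hy with h' | h'
    · simp at h'
    · rcases List.mem_append.1 h' with h'' | h''
      · exact Finset.mem_insert_of_mem (h.closeVars y h'')
      · simp at h''; simp [h'']
  · intro y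
    by_cases hxy : y = x
    · subst hxy
      simp [List.count_cons, List.count_append, List.count_eq_zero.2 ho]
    · rw [List.count_cons, List.count_append]
      have : ([VLabel.closev x] : List (VLabel Sig)).count (VLabel.openv y) = 0 := by simp
      rw [this]
      have : ((VLabel.openv y : VLabel Sig) == VLabel.openv x) = false := by
        simp [hxy]
      simp [this, show ¬ x = y from fun h' => hxy h'.symm]
      simpa using h.openCount y
  · intro y
    by_cases hxy : y = x
    · subst hxy
      simp [List.count_cons, List.count_append, List.count_eq_zero.2 hc]
    · rw [List.count_cons, List.count_append]
      have e1 : ([VLabel.closev x] : List (VLabel Sig)).count (VLabel.closev y) = 0 := by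
        exact List.count_eq_zero.2 (by simp [hxy])
      have e2 : ((VLabel.closev y : VLabel Sig) == VLabel.openv x) = false := by simp
      rw [e1]
      simp [e2]
      simpa using h.closeCount y
  · intro y
    by_cases hxy : y = x
    · subst hxy; simp
    · simp only [List.mem_cons, List.mem_append, List.mem_singleton]
      have : (VLabel.openv y : VLabel Sig) ≠ VLabel.openv x := by simp [hxy]
      have : (VLabel.closev y : VLabel Sig) ≠ VLabel.closev x := by simp [hxy]
      constructor
      · rintro (h' | h' | h')
        · simp [hxy] at h'
        · exact Or.inr (Or.inl ((h.bal y).1 h'))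
        · simp at h'
      · rintro (h' | h' | h')
        · simp at h'
        · exact Or.inr (Or.inl ((h.bal y).2 h'))
        · simp [hxy] at h'
  · intro y hy
    by_cases hxy : y = x
    · subst hxy; simp
    · have hoy : (VLabel.openv y) ∈ ls := by
        rcases List.mem_cons.1 hy with h' | h'
        · simp [hxy] at h'
        · rcases List.mem_append.1 h' with h'' | h''
          · exact h''
          · simp at h''
      have hcy : (VLabel.closev y) ∈ ls := (h.bal y).1 hoy
      rw [List.idxOf_cons_ne _ (by simp [Ne.symm hxy] :
            (VLabel.openv x : VLabel Sig) ≠ VLabel.openv y),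
        List.idxOf_cons_ne _ (by simp : (VLabel.openv x : VLabel Sig) ≠ VLabel.closev y),
        List.idxOf_append_of_mem hoy, List.idxOf_append_of_mem hcy]
      exact Nat.succ_le_succ (h.order y hoy)

lemma tra_good {γ : RGX Sig} {ls : List (VLabel Sig)} (h : TrA γ ls) :
    γ.Sequential → GoodT γ.vars ls := by
  induction h with
  | eps => intro _; exact .novars (by intro x; constructor <;> simp)
  | letter σ => intro _; exact .novars (by intro x; constructor <;> simp)
  | unionL h ih =>
      intro hseq
      exact ((ih hseq.1).mono Finset.subset_union_left).epsCons.epsSnoc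
  | unionR h ih =>
      intro hseq
      exact ((ih hseq.2).mono Finset.subset_union_right).epsCons.epsSnoc
  | concat h1 h2 ih1 ih2 =>
      intro hseq
      have := GoodT.append (ih1 hseq.1).epsCons ((ih2 hseq.2.1).epsCons.epsSnoc) hseq.2.2
      simpa [List.cons_append, List.append_assoc, RGX.vars] using this
  | starNil => intro _; exact .novars (by intro x; constructor <;> simp)
  | starCons h1 h2 ih1 ih2 =>
      rename_i a ls1 ls2
      intro hseq
      have hv : a.vars = ∅ := hseq.2
      have g1 := ih1 hseq.1
      have g2 : GoodT a.vars ls2 := ih2 hseq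
      rw [hv] at g1 g2
      have := (GoodT.append g1.epsCons g2 (by simp : Disjoint (∅ : Finset ℕ) ∅)).mono
        (by simp [RGX.vars, hv] : (∅ ∪ ∅ : Finset ℕ) ⊆ (RGX.star a).vars)
      simpa [List.cons_append] using this
  | bind h ih =>
      intro hseq
      have := GoodT.bindWrap _ (ih hseq.1) hseq.2
      simpa [List.cons_append, RGX.vars] using this

lemma idx_of_getElem {ls : List (VLabel Sig)} {lab : VLabel Sig} {i : ℕ}
    (hcount : ls.count lab ≤ 1) (h : ls[i]? = some lab) : ls.idxOf lab = i := by
  induction ls generalizing i with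
  | nil => simp at h
  | cons b t ih =>
      cases i with
      | zero =>
          simp at h; subst h; simp
      | succ n =>
          have ht : t[n]? = some lab := by simpa using h
          have hmem : lab ∈ t := List.mem_of_getElem? ht
          have hone : 1 ≤ t.count lab := List.one_le_count_iff.2 hmem
          have hb : b ≠ lab := by
            intro hb; subst hb
            rw [List.count_cons_self] at hcount; omega
          have hct : t.count lab ≤ 1 := by
            rw [List.count_cons_of_ne hb] at hcount
            exact hcount
          rw [List.idxOf_cons_ne _ hb, ih hct ht]

lemma good_valid {vs : Finset ℕ} {ls : List (VLabel Sig)} (h : GoodT vs ls) :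
    ValidLabels ls := by
  intro x
  refine ⟨h.openCount x, h.closeCount x, h.bal x, ?_⟩
  intro i j hi hj
  have mi : (VLabel.openv x) ∈ ls := List.mem_of_getElem? hi
  have ei := idx_of_getElem (h.openCount x) hi
  have ej := idx_of_getElem (h.closeCount x) hj
  have hord := h.order x mi
  show posA 1 ls i ≤ posA 1 ls j
  exact posA_mono 1 ls (by omega)

/-! ### Correspondence between traces and regex semantics -/

lemma good_empty_novars {ls : List (VLabel Sig)} (g : GoodT (∅ : Finset ℕ) ls) :
    ∀ x, (VLabel.openv x) ∉ ls ∧ (VLabel.closev x) ∉ ls := fun x =>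
  ⟨fun m => by simpa using g.openVars x m, fun m => by simpa using g.closeVars x m⟩

lemma tMap_union_shape (i : ℕ) (ls : List (VLabel Sig)) :
    tMap i (VLabel.eps :: ls ++ [VLabel.eps]) = tMap i ls := by
  rw [tMap_append_eps, tMap_eps_cons]

lemma vdisj_of_good {vs1 vs2 : Finset ℕ} {ls1 ls2 : List (VLabel Sig)}
    (g1 : GoodT vs1 ls1) (g2 : GoodT vs2 ls2) (hd : Disjoint vs1 vs2) :
    ∀ x, ((VLabel.openv x) ∈ ls1 ∨ (VLabel.closev x) ∈ ls1) →
      (VLabel.openv x) ∉ ls2 ∧ (VLabel.closev x) ∉ ls2 := by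
  intro x hx
  have hx1 : x ∈ vs1 := by
    rcases hx with h | h
    · exact g1.openVars x h
    · exact g1.closeVars x h
  have hx2 : x ∉ vs2 := Finset.disjoint_left.1 hd hx1
  exact ⟨fun m => hx2 (g2.openVars x m), fun m => hx2 (g2.closeVars x m)⟩

lemma tMap_concat_shape {vs1 vs2 : Finset ℕ} {ls1 ls2 : List (VLabel Sig)}
    (g1 : GoodT vs1 ls1) (g2 : GoodT vs2 ls2) (hdisj : Disjoint vs1 vs2) (i : ℕ) :
    tMap i (VLabel.eps :: ls1 ++ VLabel.eps :: ls2 ++ [VLabel.eps])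
      = munion (tMap i ls1) (tMap (i + lcnt ls1) ls2) := by
  have hsh : (VLabel.eps :: ls1 ++ VLabel.eps :: ls2 ++ [VLabel.eps] : List (VLabel Sig))
      = (VLabel.eps :: ls1) ++ (VLabel.eps :: ls2 ++ [VLabel.eps]) := by
    simp
  rw [hsh, tMap_append i (g1.epsCons.bal)
    (by
      intro x hx
      have hx' : (VLabel.openv x) ∈ ls1 ∨ (VLabel.closev x) ∈ ls1 := by
        rcases hx with h | h
        · exact Or.inl (by simpa using h)
        · exact Or.inr (by simpa using h)
      have := vdisj_of_good g1 g2 hdisj x hx'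
      constructor <;> simp [this.1, this.2]),
    tMap_eps_cons, tMap_union_shape]
  simp

lemma lcnt_concat_shape (ls1 ls2 : List (VLabel Sig)) :
    lcnt (VLabel.eps :: ls1 ++ VLabel.eps :: ls2 ++ [VLabel.eps]) = lcnt ls1 + lcnt ls2 := by
  have hsh : (VLabel.eps :: ls1 ++ VLabel.eps :: ls2 ++ [VLabel.eps] : List (VLabel Sig))
      = (VLabel.eps :: ls1) ++ (VLabel.eps :: ls2 ++ [VLabel.eps]) := by simp
  rw [hsh, lcnt_append]
  simp

lemma readWord_concat_shape (ls1 ls2 : List (VLabel Sig)) :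
    readWord (VLabel.eps :: ls1 ++ VLabel.eps :: ls2 ++ [VLabel.eps])
      = readWord ls1 ++ readWord ls2 := by
  have hsh : (VLabel.eps :: ls1 ++ VLabel.eps :: ls2 ++ [VLabel.eps] : List (VLabel Sig))
      = (VLabel.eps :: ls1) ++ (VLabel.eps :: ls2 ++ [VLabel.eps]) := by simp
  rw [hsh, readWord_append, readWord_append]
  simp

lemma rmatch_bounds {γ : RGX Sig} {d : List Sig} {i j : ℕ} {μ : VMapping}
    (h : RMatch γ d i j μ) : 1 ≤ i ∧ i ≤ j ∧ j ≤ d.length + 1 := by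
  induction h with
  | eps h1 h2 => exact ⟨h1, le_refl _, h2⟩
  | letter h1 h2 =>
      rename_i d i σ
      have := (List.getElem?_eq_some_iff.1 h2).1
      exact ⟨h1, by omega, by omega⟩
  | unionL h ih => exact ih
  | unionR h ih => exact ih
  | concat h1 h2 hd ih1 ih2 => exact ⟨ih1.1, by omega, by omega⟩
  | bind h hx ih => exact ih
  | starNil h1 h2 => exact ⟨h1, le_refl _, h2⟩
  | starCons h1 h2 hd ih1 ih2 => exact ⟨ih1.1, by omega, by omega⟩

theorem tra_sound {γ : RGX Sig} {ls : List (VLabel Sig)} (h : TrA γ ls) :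
    γ.Sequential → ∀ (d : List Sig) (i : ℕ), 1 ≤ i → i + lcnt ls ≤ d.length + 1 →
    (∀ k s, (readWord ls)[k]? = some s → d[i - 1 + k]? = some s) →
    RMatch γ d i (i + lcnt ls) (tMap i ls) := by
  induction h with
  | eps =>
      intro _ d i hi hlen _
      rw [tMap_novars (by simp)]
      simpa using RMatch.eps (d := d) hi (by simpa using hlen)
  | letter σ =>
      intro _ d i hi hlen hsub
      have hd : d[i - 1]? = some σ := by
        simpa using hsub 0 σ (by simp)
      rw [tMap_novars (by simp)]
      have := RMatch.letter (d := d) hi hd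
      simpa [lcnt_cons] using this
  | unionL h ih =>
      rename_i a b ls'
      intro hseq d i hi hlen hsub
      rw [tMap_union_shape]
      have hl : lcnt (VLabel.eps :: ls' ++ [VLabel.eps]) = lcnt ls' := by simp
      rw [hl] at hlen ⊢
      exact RMatch.unionL (ih hseq.1 d i hi hlen (by simpa using hsub))
  | unionR h ih =>
      rename_i a b ls'
      intro hseq d i hi hlen hsub
      rw [tMap_union_shape]
      have hl : lcnt (VLabel.eps :: ls' ++ [VLabel.eps]) = lcnt ls' := by simp
      rw [hl] at hlen ⊢
      exact RMatch.unionR (ih hseq.2 d i hi hlen (by simpa using hsub))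
  | concat h1 h2 ih1 ih2 =>
      rename_i a b ls1 ls2
      intro hseq d i hi hlen hsub
      have g1 := tra_good h1 hseq.1
      have g2 := tra_good h2 hseq.2.1
      rw [tMap_concat_shape g1 g2 hseq.2.2, lcnt_concat_shape]
      rw [lcnt_concat_shape] at hlen
      rw [readWord_concat_shape] at hsub
      have m1 : RMatch a d i (i + lcnt ls1) (tMap i ls1) := by
        refine ih1 hseq.1 d i hi (by omega) ?_
        intro k s hk
        have hk' : k < (readWord ls1).length := (List.getElem?_eq_some_iff.1 hk).1
        exact hsub k s (by rw [List.getElem?_append_left hk']; exact hk)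
      have m2 : RMatch b d (i + lcnt ls1) (i + lcnt ls1 + lcnt ls2)
          (tMap (i + lcnt ls1) ls2) := by
        refine ih2 hseq.2.1 d (i + lcnt ls1) (by omega) (by omega) ?_
        intro k s hk
        have := hsub ((readWord ls1).length + k) s
          (by rw [List.getElem?_append_right (Nat.le_add_right _ _)]; simpa using hk)
        have hidx : i - 1 + ((readWord ls1).length + k) = i + lcnt ls1 - 1 + k := by
          rw [readWord_length]; omega
        rwa [hidx] at this
      have hdisj : DisjointDom (tMap i ls1) (tMap (i + lcnt ls1) ls2) :=
        disj_tMap (fun x hx => (vdisj_of_good g1 g2 hseq.2.2 x (Or.inl hx)).1)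
      have := RMatch.concat m1 m2 hdisj
      rwa [show i + lcnt ls1 + lcnt ls2 = i + (lcnt ls1 + lcnt ls2) by omega] at this
  | starNil =>
      intro _ d i hi hlen _
      rw [tMap_novars (by simp)]
      simpa using RMatch.starNil (d := d) hi (by simpa using hlen)
  | starCons h1 h2 ih1 ih2 =>
      rename_i a ls1 ls2
      intro hseq d i hi hlen hsub
      have g1 := tra_good h1 hseq.1
      have g2 := tra_good h2 hseq
      rw [hseq.2] at g1
      have g2' : GoodT (∅ : Finset ℕ) ls2 := by
        have : (RGX.star a).vars = (∅ : Finset ℕ) := hseq.2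
        rwa [this] at g2
      have hsh : (VLabel.eps :: ls1 ++ ls2 : List (VLabel Sig))
          = (VLabel.eps :: ls1) ++ ls2 := by simp
      have hl : lcnt (VLabel.eps :: ls1 ++ ls2) = lcnt ls1 + lcnt ls2 := by
        rw [hsh, lcnt_append]; simp
      have hrw : readWord (VLabel.eps :: ls1 ++ ls2) = readWord ls1 ++ readWord ls2 := by
        rw [hsh, readWord_append]; simp
      rw [hl] at hlen ⊢
      rw [hrw] at hsub
      have m1 : RMatch a d i (i + lcnt ls1) (tMap i ls1) := by
        refine ih1 hseq.1 d i hi (by omega) ?_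
        intro k s hk
        have hk' : k < (readWord ls1).length := (List.getElem?_eq_some_iff.1 hk).1
        exact hsub k s (by rw [List.getElem?_append_left hk']; exact hk)
      have m2 : RMatch (RGX.star a) d (i + lcnt ls1) (i + lcnt ls1 + lcnt ls2)
          (tMap (i + lcnt ls1) ls2) := by
        refine ih2 hseq d (i + lcnt ls1) (by omega) (by omega) ?_
        intro k s hk
        have := hsub ((readWord ls1).length + k) s
          (by rw [List.getElem?_append_right (Nat.le_add_right _ _)]; simpa using hk)
        have hidx : i - 1 + ((readWord ls1).length + k) = i + lcnt ls1 - 1 + k := by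
          rw [readWord_length]; omega
        rwa [hidx] at this
      rw [tMap_novars (fun x => (good_empty_novars g1 x).1)] at m1
      rw [tMap_novars (fun x => (good_empty_novars g2' x).1)] at m2
      have := RMatch.starCons m1 m2 (fun x => Or.inl rfl)
      rw [munion_empty_empty] at this
      rw [tMap_novars ?hnv]
      · rwa [show i + lcnt ls1 + lcnt ls2 = i + (lcnt ls1 + lcnt ls2) by omega] at this
      · intro x
        have n1 := good_empty_novars g1 x
        have n2 := good_empty_novars g2' x
        simp [n1.1, n2.1]
  | bind h ih =>
      rename_i x a ls'
      intro hseq d i hi hlen hsub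
      have g := tra_good h hseq.1
      have ho : (VLabel.openv x) ∉ ls' := fun m => hseq.2 (g.openVars x m)
      have hc : (VLabel.closev x) ∉ ls' := fun m => hseq.2 (g.closeVars x m)
      rw [tMap_bind i x ho hc g.bal]
      have hl : lcnt (VLabel.openv x :: ls' ++ [VLabel.closev x]) = lcnt ls' := by simp
      rw [hl] at hlen ⊢
      have m1 : RMatch a d i (i + lcnt ls') (tMap i ls') :=
        ih hseq.1 d i hi hlen (by simpa using hsub)
      exact RMatch.bind m1 (tMap_eq_of_not_mem _ ho)

theorem tra_complete {γ : RGX Sig} {d : List Sig} {i j : ℕ} {μ : VMapping}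
    (h : RMatch γ d i j μ) : γ.Sequential →
    ∃ ls, TrA γ ls ∧ lcnt ls = j - i ∧
      readWord ls = (d.drop (i - 1)).take (j - i) ∧ μ = tMap i ls := by
  induction h with
  | eps h1 h2 =>
      intro _
      exact ⟨[VLabel.eps], TrA.eps, by simp, by simp, (tMap_novars (by simp)).symm⟩
  | letter h1 h2 =>
      rename_i d i σ
      intro _
      refine ⟨[VLabel.letter σ], TrA.letter σ, by simp [lcnt_cons], ?_, 
        (tMap_novars (by simp)).symm⟩
      have hd : d[i - 1]? = some σ := by exact h2
      have hdrop : (d.drop (i - 1))[0]? = some σ := by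
        rw [List.getElem?_drop]; simpa using hd
      rcases hE : d.drop (i - 1) with _ | ⟨a, t⟩
      · rw [hE] at hdrop; simp at hdrop
      · rw [hE] at hdrop; simp at hdrop
        subst hdrop
        simp [show i + 1 - i = 1 by omega]
  | unionL h ih =>
      rename_i a b d i j μ
      intro hseq
      obtain ⟨ls', ht, hl, hr, hm⟩ := ih hseq.1
      exact ⟨VLabel.eps :: ls' ++ [VLabel.eps], TrA.unionL ht, by simpa using hl,
        by simpa using hr, by rw [tMap_union_shape]; exact hm⟩
  | unionR h ih =>
      rename_i a b d i j μ
      intro hseq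
      obtain ⟨ls', ht, hl, hr, hm⟩ := ih hseq.2
      exact ⟨VLabel.eps :: ls' ++ [VLabel.eps], TrA.unionR ht, by simpa using hl,
        by simpa using hr, by rw [tMap_union_shape]; exact hm⟩
  | concat h1 h2 hd ih1 ih2 =>
      rename_i a b d i k j μ1 μ2
      intro hseq
      obtain ⟨b1i, b1k, _⟩ := rmatch_bounds h1
      obtain ⟨b2k, b2j, _⟩ := rmatch_bounds h2
      obtain ⟨ls1, ht1, hl1, hr1, hm1⟩ := ih1 hseq.1
      obtain ⟨ls2, ht2, hl2, hr2, hm2⟩ := ih2 hseq.2.1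
      have g1 := tra_good ht1 hseq.1
      have g2 := tra_good ht2 hseq.2.1
      refine ⟨VLabel.eps :: ls1 ++ VLabel.eps :: ls2 ++ [VLabel.eps],
        TrA.concat ht1 ht2, ?_, ?_, ?_⟩
      · rw [lcnt_concat_shape]; omega
      · rw [readWord_concat_shape, hr1, hr2]
        have hdd : d.drop (k - 1) = (d.drop (i - 1)).drop (k - i) := by
          rw [List.drop_drop]
          congr 1
          omega
        rw [hdd, ← List.take_add,
          show k - i + (j - k) = j - i by omega]
      · rw [tMap_concat_shape g1 g2 hseq.2.2, ← hm1,
          show i + lcnt ls1 = k by omega, ← hm2]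
  | bind h hx ih =>
      rename_i x a d i j μ'
      intro hseq
      obtain ⟨bi, bij, _⟩ := rmatch_bounds h
      obtain ⟨ls', ht, hl, hr, hm⟩ := ih hseq.1
      have g := tra_good ht hseq.1
      have ho : (VLabel.openv x) ∉ ls' := fun m => hseq.2 (g.openVars x m)
      have hc : (VLabel.closev x) ∉ ls' := fun m => hseq.2 (g.closeVars x m)
      refine ⟨VLabel.openv x :: ls' ++ [VLabel.closev x], TrA.bind ht,
        by simpa using hl, by simpa using hr, ?_⟩
      rw [tMap_bind i x ho hc g.bal, ← hm, show i + lcnt ls' = j by omega]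
  | starNil h1 h2 =>
      intro _
      exact ⟨[VLabel.eps], TrA.starNil, by simp, by simp, (tMap_novars (by simp)).symm⟩
  | starCons h1 h2 hd ih1 ih2 =>
      rename_i a d i k j μ1 μ2
      intro hseq
      obtain ⟨b1i, b1k, _⟩ := rmatch_bounds h1
      obtain ⟨b2k, b2j, _⟩ := rmatch_bounds h2
      obtain ⟨ls1, ht1, hl1, hr1, hm1⟩ := ih1 hseq.1
      obtain ⟨ls2, ht2, hl2, hr2, hm2⟩ := ih2 hseq
      have g1 := tra_good ht1 hseq.1
      have g2 := tra_good ht2 hseq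
      rw [hseq.2] at g1
      have g2' : GoodT (∅ : Finset ℕ) ls2 := by
        have hv : (RGX.star a).vars = (∅ : Finset ℕ) := hseq.2
        rwa [hv] at g2
      have hsh : (VLabel.eps :: ls1 ++ ls2 : List (VLabel Sig))
          = (VLabel.eps :: ls1) ++ ls2 := by simp
      refine ⟨VLabel.eps :: ls1 ++ ls2, TrA.starCons ht1 ht2, ?_, ?_, ?_⟩
      · rw [hsh, lcnt_append]; simp; omega
      · rw [hsh, readWord_append]
        simp only [readWord_eps_cons]
        rw [hr1, hr2]
        have hdd : d.drop (k - 1) = (d.drop (i - 1)).drop (k - i) := by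
          rw [List.drop_drop]
          congr 1
          omega
        rw [hdd, ← List.take_add, show k - i + (j - k) = j - i by omega]
      · rw [tMap_novars ?hnv]
        · rw [hm1, hm2, tMap_novars (fun x => (good_empty_novars g1 x).1),
            tMap_novars (fun x => (good_empty_novars g2' x).1), munion_empty_empty]
        · intro x
          have n1 := good_empty_novars g1 x
          have n2 := good_empty_novars g2' x
          simp [n1.1, n2.1]

/-! ### The Thompson-style construction -/

lemma size_pos (γ : RGX Sig) : 1 ≤ γ.size := by
  cases γ <;> simp [RGX.size]

def fragδ : RGX Sig → ℕ → Finset (ℕ × VLabel Sig × ℕ)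
  | .empty, _ => ∅
  | .eps, n => {(n, VLabel.eps, n+1)}
  | .letter σ, n => {(n, VLabel.letter σ, n+1)}
  | .union a b, n =>
      fragδ a (n+2) ∪ fragδ b (n+2+2*a.size) ∪
      {(n, VLabel.eps, n+2), (n, VLabel.eps, n+2+2*a.size),
       (n+3, VLabel.eps, n+1), (n+2+2*a.size+1, VLabel.eps, n+1)}
  | .concat a b, n =>
      fragδ a (n+2) ∪ fragδ b (n+2+2*a.size) ∪
      {(n, VLabel.eps, n+2), (n+3, VLabel.eps, n+2+2*a.size),
       (n+2+2*a.size+1, VLabel.eps, n+1)}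
  | .star a, n =>
      fragδ a (n+2) ∪
      {(n, VLabel.eps, n+1), (n, VLabel.eps, n+2),
       (n+3, VLabel.eps, n+2), (n+3, VLabel.eps, n+1)}
  | .bind x a, n =>
      fragδ a (n+2) ∪ {(n, VLabel.openv x, n+2), (n+3, VLabel.closev x, n+1)}

def toVA (γ : RGX Sig) : VA Sig := ⟨0, {1}, fragδ γ 0⟩

lemma frag_bound {γ : RGX Sig} {n p q : ℕ} {l : VLabel Sig} (h : (p,l,q) ∈ fragδ γ n) :
    n ≤ p ∧ p < n + 2*γ.size ∧ p ≠ n+1 ∧ n ≤ q ∧ q < n + 2*γ.size := by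
  induction γ generalizing n p q l with
  | empty => simp [fragδ] at h
  | eps =>
      simp only [fragδ, Finset.mem_singleton, Prod.mk.injEq] at h
      obtain ⟨rfl, -, rfl⟩ := h
      simp only [RGX.size]; omega
  | letter σ =>
      simp only [fragδ, Finset.mem_singleton, Prod.mk.injEq] at h
      obtain ⟨rfl, -, rfl⟩ := h
      simp only [RGX.size]; omega
  | union a b iha ihb =>
      have hsa := size_pos a; have hsb := size_pos b
      simp only [fragδ, Finset.mem_union, Finset.mem_insert, Finset.mem_singleton] at h
      simp only [RGX.size]
      rcases h with (h | h) | h | h | h | h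
      · have := iha h; omega
      · have := ihb h; omega
      all_goals (simp only [Prod.mk.injEq] at h; obtain ⟨rfl, -, rfl⟩ := h; omega)
  | concat a b iha ihb =>
      have hsa := size_pos a; have hsb := size_pos b
      simp only [fragδ, Finset.mem_union, Finset.mem_insert, Finset.mem_singleton] at h
      simp only [RGX.size]
      rcases h with (h | h) | h | h | h
      · have := iha h; omega
      · have := ihb h; omega
      all_goals (simp only [Prod.mk.injEq] at h; obtain ⟨rfl, -, rfl⟩ := h; omega)
  | star a iha =>
      have hsa := size_pos a
      simp only [fragδ, Finset.mem_union, Finset.mem_insert, Finset.mem_singleton] at h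
      simp only [RGX.size]
      rcases h with h | h | h | h | h
      · have := iha h; omega
      all_goals (simp only [Prod.mk.injEq] at h; obtain ⟨rfl, -, rfl⟩ := h; omega)
  | bind x a iha =>
      have hsa := size_pos a
      simp only [fragδ, Finset.mem_union, Finset.mem_insert, Finset.mem_singleton] at h
      simp only [RGX.size]
      rcases h with h | h | h
      · have := iha h; omega
      all_goals (simp only [Prod.mk.injEq] at h; obtain ⟨rfl, -, rfl⟩ := h; omega)

lemma frag_bound' {c : RGX Sig} {nc : ℕ} : ∀ p (l : VLabel Sig) q, (p,l,q) ∈ fragδ c nc →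
    nc ≤ p ∧ p < nc + 2*c.size ∧ nc ≤ q ∧ q < nc + 2*c.size ∧ p ≠ nc+1 := by
  intro p l q h
  have hb := frag_bound h
  exact ⟨hb.1, hb.2.1, hb.2.2.2.1, hb.2.2.2.2, hb.2.2.1⟩

lemma no_out_final {γ : RGX Sig} {n : ℕ} {ls : List (VLabel Sig)} {q : ℕ}
    (h : PathD (fragδ γ n) (n+1) ls q) : ls = [] ∧ q = n+1 := by
  cases h with
  | nil => exact ⟨rfl, rfl⟩
  | cons h' ht => exact absurd rfl (frag_bound h').2.2.1

lemma pass_through {δall δa : Finset (ℕ × VLabel Sig × ℕ)} {lo hi fa tgt : ℕ}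
    (hbound : ∀ p (l : VLabel Sig) q, (p,l,q) ∈ δa →
      lo ≤ p ∧ p < hi ∧ lo ≤ q ∧ q < hi ∧ p ≠ fa)
    (hout : ∀ p (l : VLabel Sig) q, (p,l,q) ∈ δall → lo ≤ p → p < hi →
      (p,l,q) ∈ δa ∨ p = fa) :
    ∀ ls p, PathD δall p ls tgt → (tgt < lo ∨ hi ≤ tgt) → lo ≤ p → p < hi →
      ∃ ls1 l2 q2 ls2, ls = ls1 ++ l2 :: ls2 ∧ PathD δa p ls1 fa ∧
        (fa, l2, q2) ∈ δall ∧ PathD δall q2 ls2 tgt := by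
  intro ls p h
  induction h with
  | nil q => intro ht hlo hhi; omega
  | cons h' htl ih =>
      intro ht hlo hhi
      rcases hout _ _ _ h' hlo hhi with hin | hfa
      · have hb := hbound _ _ _ hin
        obtain ⟨ls1, l2, q2, ls2, rfl, hp1, hex, hp2⟩ := ih ht hb.2.2.1 hb.2.2.2.1
        exact ⟨_ :: ls1, l2, q2, ls2, rfl, .cons hin hp1, hex, hp2⟩
      · subst hfa
        exact ⟨[], _, _, _, rfl, .nil _, h', htl⟩

lemma frag_union_subl {a b : RGX Sig} {n : ℕ} :
    fragδ a (n+2) ⊆ fragδ (RGX.union a b) n := by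
  intro t ht; simp only [fragδ, Finset.mem_union]; exact Or.inl (Or.inl ht)

lemma frag_union_subr {a b : RGX Sig} {n : ℕ} :
    fragδ b (n+2+2*a.size) ⊆ fragδ (RGX.union a b) n := by
  intro t ht; simp only [fragδ, Finset.mem_union]; exact Or.inl (Or.inr ht)

lemma frag_concat_subl {a b : RGX Sig} {n : ℕ} :
    fragδ a (n+2) ⊆ fragδ (RGX.concat a b) n := by
  intro t ht; simp only [fragδ, Finset.mem_union]; exact Or.inl (Or.inl ht)

lemma frag_concat_subr {a b : RGX Sig} {n : ℕ} :
    fragδ b (n+2+2*a.size) ⊆ fragδ (RGX.concat a b) n := by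
  intro t ht; simp only [fragδ, Finset.mem_union]; exact Or.inl (Or.inr ht)

lemma frag_star_sub {a : RGX Sig} {n : ℕ} :
    fragδ a (n+2) ⊆ fragδ (RGX.star a) n := by
  intro t ht; simp only [fragδ, Finset.mem_union]; exact Or.inl ht

lemma frag_bind_sub {x : ℕ} {a : RGX Sig} {n : ℕ} :
    fragδ a (n+2) ⊆ fragδ (RGX.bind x a) n := by
  intro t ht; simp only [fragδ, Finset.mem_union]; exact Or.inl ht

lemma star_shift {a : RGX Sig} {n q : ℕ} {l : VLabel Sig} {ls : List (VLabel Sig)}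
    (h : PathD (fragδ (RGX.star a) n) n (l :: ls) q) :
    PathD (fragδ (RGX.star a) n) (n+3) (l :: ls) q := by
  cases h with
  | cons h' ht =>
      simp only [fragδ, Finset.mem_union, Finset.mem_insert, Finset.mem_singleton] at h'
      rcases h' with h' | h' | h' | h' | h'
      · exfalso; have := frag_bound h'; omega
      · simp only [Prod.mk.injEq] at h'; obtain ⟨-, rfl, rfl⟩ := h'
        exact .cons (by simp [fragδ] : ((n+3 : ℕ), (VLabel.eps : VLabel Sig), n+1) ∈ _) ht
      · simp only [Prod.mk.injEq] at h'; obtain ⟨-, rfl, rfl⟩ := h'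
        exact .cons (by simp [fragδ] : ((n+3 : ℕ), (VLabel.eps : VLabel Sig), n+2) ∈ _) ht
      · simp only [Prod.mk.injEq] at h'; obtain ⟨hn, -, -⟩ := h'; omega
      · simp only [Prod.mk.injEq] at h'; obtain ⟨hn, -, -⟩ := h'; omega

lemma tra_path {γ : RGX Sig} {ls : List (VLabel Sig)} (h : TrA γ ls) :
    ∀ n, PathD (fragδ γ n) n ls (n+1) := by
  induction h with
  | eps => intro n; exact .cons (by simp [fragδ]) (.nil _)
  | letter σ => intro n; exact .cons (by simp [fragδ]) (.nil _)
  | unionL h ih =>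
      rename_i a b ls'
      intro n
      have hp := (ih (n+2)).mono (frag_union_subl (b := b))
      exact .cons (by simp [fragδ] : ((n:ℕ), (VLabel.eps : VLabel Sig), n+2) ∈ _)
        (hp.append (.cons
          (by simp [fragδ] : ((n+3:ℕ), (VLabel.eps : VLabel Sig), n+1) ∈ _) (.nil _)))
  | unionR h ih =>
      rename_i a b ls'
      intro n
      have hp := (ih (n+2+2*a.size)).mono (frag_union_subr (a := a))
      exact .cons (by simp [fragδ] : ((n:ℕ), (VLabel.eps : VLabel Sig), n+2+2*a.size) ∈ _)
        (hp.append (.cons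
          (by simp [fragδ] :
            ((n+2+2*a.size+1:ℕ), (VLabel.eps : VLabel Sig), n+1) ∈ _) (.nil _)))
  | concat h1 h2 ih1 ih2 =>
      rename_i a b ls1 ls2
      intro n
      have hp1 := (ih1 (n+2)).mono (frag_concat_subl (b := b))
      have hp2 := (ih2 (n+2+2*a.size)).mono (frag_concat_subr (a := a))
      have hfull : PathD (fragδ (RGX.concat a b) n) n
          (VLabel.eps :: (ls1 ++ (VLabel.eps :: (ls2 ++ [VLabel.eps])))) (n+1) :=
        .cons (by simp [fragδ] : ((n:ℕ), (VLabel.eps : VLabel Sig), n+2) ∈ _)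
          (hp1.append (.cons
            (by simp [fragδ] : ((n+3:ℕ), (VLabel.eps : VLabel Sig), n+2+2*a.size) ∈ _)
            (hp2.append (.cons
              (by simp [fragδ] :
                ((n+2+2*a.size+1:ℕ), (VLabel.eps : VLabel Sig), n+1) ∈ _) (.nil _)))))
      simpa [List.cons_append, List.append_assoc] using hfull
  | starNil =>
      intro n
      exact .cons (by simp [fragδ] : ((n:ℕ), (VLabel.eps : VLabel Sig), n+1) ∈ _) (.nil _)
  | starCons h1 h2 ih1 ih2 =>
      rename_i a ls1 ls2
      intro n
      have hp1 := (ih1 (n+2)).mono (frag_star_sub (a := a))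
      have hp2 := ih2 n
      cases hE : ls2 with
      | nil => exact absurd hE h2.ne_nil
      | cons l t =>
          rw [hE] at hp2
          exact .cons (by simp [fragδ] : ((n:ℕ), (VLabel.eps : VLabel Sig), n+2) ∈ _)
            (hp1.append (star_shift hp2))
  | bind h ih =>
      rename_i x a ls'
      intro n
      have hp := (ih (n+2)).mono (frag_bind_sub (x := x) (a := a))
      exact .cons (by simp [fragδ] : ((n:ℕ), (VLabel.openv x : VLabel Sig), n+2) ∈ _)
        (hp.append (.cons
          (by simp [fragδ] : ((n+3:ℕ), (VLabel.closev x : VLabel Sig), n+1) ∈ _) (.nil _)))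

lemma path_tra : ∀ (γ : RGX Sig) (n : ℕ) (ls : List (VLabel Sig)),
    PathD (fragδ γ n) n ls (n+1) → TrA γ ls := by
  intro γ
  induction γ with
  | empty =>
      intro n ls h
      cases h with
      | cons h' ht => simp [fragδ] at h'
  | eps =>
      intro n ls h
      cases h with
      | cons h' ht =>
          simp only [fragδ, Finset.mem_singleton, Prod.mk.injEq] at h'
          obtain ⟨-, rfl, rfl⟩ := h'
          obtain ⟨rfl, -⟩ := no_out_final ht
          exact TrA.eps
  | letter σ =>
      intro n ls h
      cases h with
      | cons h' ht =>
          simp only [fragδ, Finset.mem_singleton, Prod.mk.injEq] at h'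
          obtain ⟨-, rfl, rfl⟩ := h'
          obtain ⟨rfl, -⟩ := no_out_final ht
          exact TrA.letter σ
  | union a b iha ihb =>
      intro n ls h
      have hsa := size_pos a; have hsb := size_pos b
      have houtA : ∀ p (l : VLabel Sig) q, (p,l,q) ∈ fragδ (RGX.union a b) n →
          n+2 ≤ p → p < n+2+2*a.size → (p,l,q) ∈ fragδ a (n+2) ∨ p = (n+2)+1 := by
        intro p l q hm hlo hhi
        simp only [fragδ, Finset.mem_union, Finset.mem_insert, Finset.mem_singleton] at hm
        rcases hm with (hm | hm) | hm | hm | hm | hm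
        · exact Or.inl hm
        · exfalso; have := frag_bound hm; omega
        all_goals (simp only [Prod.mk.injEq] at hm; obtain ⟨rfl, -, -⟩ := hm)
        · exfalso; omega
        · exfalso; omega
        · exact Or.inr rfl
        · exfalso; omega
      have houtB : ∀ p (l : VLabel Sig) q, (p,l,q) ∈ fragδ (RGX.union a b) n →
          n+2+2*a.size ≤ p → p < n+2+2*a.size+2*b.size →
          (p,l,q) ∈ fragδ b (n+2+2*a.size) ∨ p = (n+2+2*a.size)+1 := by
        intro p l q hm hlo hhi
        simp only [fragδ, Finset.mem_union, Finset.mem_insert, Finset.mem_singleton] at hm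
        rcases hm with (hm | hm) | hm | hm | hm | hm
        · exfalso; have := frag_bound hm; omega
        · exact Or.inl hm
        all_goals (simp only [Prod.mk.injEq] at hm; obtain ⟨rfl, -, -⟩ := hm)
        · exfalso; omega
        · exfalso; omega
        · exfalso; omega
        · exact Or.inr rfl
      cases h with
      | cons h' ht =>
          simp only [fragδ, Finset.mem_union, Finset.mem_insert, Finset.mem_singleton] at h'
          rcases h' with (h' | h') | h' | h' | h' | h'
          · exfalso; have := frag_bound h'; omega
          · exfalso; have := frag_bound h'; omega
          · -- first step to start of a
            simp only [Prod.mk.injEq] at h'; obtain ⟨-, rfl, rfl⟩ := h'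
            obtain ⟨ls1, l2, q2, ls2, rfl, hp1, hex, hp2⟩ :=
              pass_through frag_bound' houtA _ _ ht (by omega) (by omega) (by omega)
            -- identify the exit transition from n+3
            simp only [fragδ, Finset.mem_union, Finset.mem_insert, Finset.mem_singleton] at hex
            rcases hex with (hex | hex) | hex | hex | hex | hex
            · exfalso; exact (frag_bound hex).2.2.1 rfl
            · exfalso; have := frag_bound hex; omega
            all_goals (simp only [Prod.mk.injEq] at hex)
            · exfalso; omega
            · exfalso; omega
            · obtain ⟨-, rfl, rfl⟩ := hex
              obtain ⟨rfl, -⟩ := no_out_final hp2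
              exact TrA.unionL (iha _ _ hp1)
            · exfalso; omega
          · -- first step to start of b
            simp only [Prod.mk.injEq] at h'; obtain ⟨-, rfl, rfl⟩ := h'
            obtain ⟨ls1, l2, q2, ls2, rfl, hp1, hex, hp2⟩ :=
              pass_through frag_bound' houtB _ _ ht (by omega) (by omega) (by omega)
            simp only [fragδ, Finset.mem_union, Finset.mem_insert, Finset.mem_singleton] at hex
            rcases hex with (hex | hex) | hex | hex | hex | hex
            · exfalso; have := frag_bound hex; omega
            · exfalso; exact (frag_bound hex).2.2.1 rfl
            all_goals (simp only [Prod.mk.injEq] at hex)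
            · exfalso; omega
            · exfalso; omega
            · exfalso; omega
            · obtain ⟨-, rfl, rfl⟩ := hex
              obtain ⟨rfl, -⟩ := no_out_final hp2
              exact TrA.unionR (ihb _ _ hp1)
          · simp only [Prod.mk.injEq] at h'; obtain ⟨hn, -, -⟩ := h'; omega
          · simp only [Prod.mk.injEq] at h'; obtain ⟨hn, -, -⟩ := h'; omega
  | concat a b iha ihb =>
      intro n ls h
      have hsa := size_pos a; have hsb := size_pos b
      have houtA : ∀ p (l : VLabel Sig) q, (p,l,q) ∈ fragδ (RGX.concat a b) n →
          n+2 ≤ p → p < n+2+2*a.size → (p,l,q) ∈ fragδ a (n+2) ∨ p = (n+2)+1 := by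
        intro p l q hm hlo hhi
        simp only [fragδ, Finset.mem_union, Finset.mem_insert, Finset.mem_singleton] at hm
        rcases hm with (hm | hm) | hm | hm | hm
        · exact Or.inl hm
        · exfalso; have := frag_bound hm; omega
        all_goals (simp only [Prod.mk.injEq] at hm; obtain ⟨rfl, -, -⟩ := hm)
        · exfalso; omega
        · exact Or.inr rfl
        · exfalso; omega
      have houtB : ∀ p (l : VLabel Sig) q, (p,l,q) ∈ fragδ (RGX.concat a b) n →
          n+2+2*a.size ≤ p → p < n+2+2*a.size+2*b.size →
          (p,l,q) ∈ fragδ b (n+2+2*a.size) ∨ p = (n+2+2*a.size)+1 := by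
        intro p l q hm hlo hhi
        simp only [fragδ, Finset.mem_union, Finset.mem_insert, Finset.mem_singleton] at hm
        rcases hm with (hm | hm) | hm | hm | hm
        · exfalso; have := frag_bound hm; omega
        · exact Or.inl hm
        all_goals (simp only [Prod.mk.injEq] at hm; obtain ⟨rfl, -, -⟩ := hm)
        · exfalso; omega
        · exfalso; omega
        · exact Or.inr rfl
      cases h with
      | cons h' ht =>
          simp only [fragδ, Finset.mem_union, Finset.mem_insert, Finset.mem_singleton] at h'
          rcases h' with (h' | h') | h' | h' | h'
          · exfalso; have := frag_bound h'; omega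
          · exfalso; have := frag_bound h'; omega
          · simp only [Prod.mk.injEq] at h'; obtain ⟨-, rfl, rfl⟩ := h'
            obtain ⟨ls1, l2, q2, ls2, rfl, hp1, hex, hp2⟩ :=
              pass_through frag_bound' houtA _ _ ht (by omega) (by omega) (by omega)
            simp only [fragδ, Finset.mem_union, Finset.mem_insert, Finset.mem_singleton] at hex
            rcases hex with (hex | hex) | hex | hex | hex
            · exfalso; exact (frag_bound hex).2.2.1 rfl
            · exfalso; have := frag_bound hex; omega
            all_goals (simp only [Prod.mk.injEq] at hex)
            · exfalso; omega
            · -- exit to start of b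
              obtain ⟨-, rfl, rfl⟩ := hex
              obtain ⟨ls2', l3, q3, ls3, rfl, hp2', hex2, hp3⟩ :=
                pass_through frag_bound' houtB _ _ hp2 (by omega) (by omega) (by omega)
              simp only [fragδ, Finset.mem_union, Finset.mem_insert,
                Finset.mem_singleton] at hex2
              rcases hex2 with (hex2 | hex2) | hex2 | hex2 | hex2
              · exfalso; have := frag_bound hex2; omega
              · exfalso; exact (frag_bound hex2).2.2.1 rfl
              all_goals (simp only [Prod.mk.injEq] at hex2)
              · exfalso; omega
              · exfalso; omega
              · obtain ⟨-, rfl, rfl⟩ := hex2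
                obtain ⟨rfl, -⟩ := no_out_final hp3
                have := TrA.concat (iha _ _ hp1) (ihb _ _ hp2')
                simpa [List.cons_append, List.append_assoc] using this
            · exfalso; omega
          · simp only [Prod.mk.injEq] at h'; obtain ⟨hn, -, -⟩ := h'; omega
          · simp only [Prod.mk.injEq] at h'; obtain ⟨hn, -, -⟩ := h'; omega
  | star a iha =>
      intro n ls h
      have hsa := size_pos a
      have hout : ∀ p (l : VLabel Sig) q, (p,l,q) ∈ fragδ (RGX.star a) n →
          n+2 ≤ p → p < n+2+2*a.size → (p,l,q) ∈ fragδ a (n+2) ∨ p = (n+2)+1 := by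
        intro p l q hm hlo hhi
        simp only [fragδ, Finset.mem_union, Finset.mem_insert, Finset.mem_singleton] at hm
        rcases hm with hm | hm | hm | hm | hm
        · exact Or.inl hm
        all_goals (simp only [Prod.mk.injEq] at hm; obtain ⟨rfl, -, -⟩ := hm)
        · exfalso; omega
        · exfalso; omega
        · exact Or.inr rfl
        · exact Or.inr rfl
      have main : ∀ N (ls' : List (VLabel Sig)), ls'.length ≤ N →
          PathD (fragδ (RGX.star a) n) (n+2) ls' (n+1) →
          TrA (RGX.star a) (VLabel.eps :: ls') := by
        intro N
        induction N with
        | zero =>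
            intro ls' hlen hp
            have : ls' = [] := List.length_eq_zero_iff.1 (by omega)
            subst this
            cases hp
        | succ N ihN =>
            intro ls' hlen hp
            obtain ⟨ls1, l2, q2, ls2, rfl, hp1, hex, hp2⟩ :=
              pass_through frag_bound' hout _ _ hp (by omega) (by omega) (by omega)
            simp only [fragδ, Finset.mem_union, Finset.mem_insert, Finset.mem_singleton] at hex
            rcases hex with hex | hex | hex | hex | hex
            · exfalso; exact (frag_bound hex).2.2.1 rfl
            all_goals (simp only [Prod.mk.injEq] at hex)
            · exfalso; omega
            · exfalso; omega
            · -- loop back to n+2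
              obtain ⟨-, rfl, rfl⟩ := hex
              have hrec := ihN ls2 (by simp at hlen ⊢; omega) hp2
              exact TrA.starCons (iha _ _ hp1) hrec
            · -- exit to n+1
              obtain ⟨-, rfl, rfl⟩ := hex
              obtain ⟨rfl, -⟩ := no_out_final hp2
              exact TrA.starCons (iha _ _ hp1) TrA.starNil
      cases h with
      | cons h' ht =>
          simp only [fragδ, Finset.mem_union, Finset.mem_insert, Finset.mem_singleton] at h'
          rcases h' with h' | h' | h' | h' | h'
          · exfalso; have := frag_bound h'; omega
          all_goals (simp only [Prod.mk.injEq] at h')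
          · obtain ⟨-, rfl, rfl⟩ := h'
            obtain ⟨rfl, -⟩ := no_out_final ht
            exact TrA.starNil
          · obtain ⟨-, rfl, rfl⟩ := h'
            exact main _ _ (le_refl _) ht
          · obtain ⟨hn, -, -⟩ := h'; omega
          · obtain ⟨hn, -, -⟩ := h'; omega
  | bind x a iha =>
      intro n ls h
      have hsa := size_pos a
      have hout : ∀ p (l : VLabel Sig) q, (p,l,q) ∈ fragδ (RGX.bind x a) n →
          n+2 ≤ p → p < n+2+2*a.size → (p,l,q) ∈ fragδ a (n+2) ∨ p = (n+2)+1 := by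
        intro p l q hm hlo hhi
        simp only [fragδ, Finset.mem_union, Finset.mem_insert, Finset.mem_singleton] at hm
        rcases hm with hm | hm | hm
        · exact Or.inl hm
        all_goals (simp only [Prod.mk.injEq] at hm; obtain ⟨rfl, -, -⟩ := hm)
        · exfalso; omega
        · exact Or.inr rfl
      cases h with
      | cons h' ht =>
          simp only [fragδ, Finset.mem_union, Finset.mem_insert, Finset.mem_singleton] at h'
          rcases h' with h' | h' | h'
          · exfalso; have := frag_bound h'; omega
          all_goals (simp only [Prod.mk.injEq] at h')
          · obtain ⟨-, rfl, rfl⟩ := h'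
            obtain ⟨ls1, l2, q2, ls2, rfl, hp1, hex, hp2⟩ :=
              pass_through frag_bound' hout _ _ ht (by omega) (by omega) (by omega)
            simp only [fragδ, Finset.mem_union, Finset.mem_insert, Finset.mem_singleton] at hex
            rcases hex with hex | hex | hex
            · exfalso; exact (frag_bound hex).2.2.1 rfl
            all_goals (simp only [Prod.mk.injEq] at hex)
            · exfalso; omega
            · obtain ⟨-, rfl, rfl⟩ := hex
              obtain ⟨rfl, -⟩ := no_out_final hp2
              exact TrA.bind (iha _ _ hp1)
          · obtain ⟨hn, -, -⟩ := h'; omega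

lemma accepts_iff (γ : RGX Sig) (ls : List (VLabel Sig)) :
    AcceptsWith (toVA γ) ls ↔ TrA γ ls := by
  constructor
  · rintro ⟨qf, hp, hf⟩
    have hf' : qf = 1 := by simpa [toVA] using hf
    subst hf'
    exact path_tra γ 0 ls ((pathfrom_iff_pathd _ _ _ _).1 hp)
  · intro h
    exact ⟨1, (pathfrom_iff_pathd _ _ _ _).2 (tra_path h 0), by simp [toVA]⟩

/-! ### Sizes -/

lemma card_le_four {α : Type*} [DecidableEq α] (a b c d : α) :
    ({a, b, c, d} : Finset α).card ≤ 4 :=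
  le_trans (Finset.card_insert_le _ _) (Nat.succ_le_succ
    (le_trans (Finset.card_insert_le _ _) (Nat.succ_le_succ
      (le_trans (Finset.card_insert_le _ _) (Nat.succ_le_succ (by simp))))))

lemma card_le_three {α : Type*} [DecidableEq α] (a b c : α) :
    ({a, b, c} : Finset α).card ≤ 3 :=
  le_trans (Finset.card_insert_le _ _) (Nat.succ_le_succ
    (le_trans (Finset.card_insert_le _ _) (Nat.succ_le_succ (by simp))))

lemma card_le_two {α : Type*} [DecidableEq α] (a b : α) :
    ({a, b} : Finset α).card ≤ 2 :=
  le_trans (Finset.card_insert_le _ _) (Nat.succ_le_succ (by simp))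

lemma frag_card (γ : RGX Sig) : ∀ n, (fragδ γ n).card ≤ 4 * γ.size := by
  induction γ with
  | empty => intro n; simp [fragδ, RGX.size]
  | eps => intro n; simp [fragδ, RGX.size]
  | letter σ => intro n; simp [fragδ, RGX.size]
  | union a b iha ihb =>
      intro n
      have h1 := Finset.card_union_le (fragδ a (n+2) ∪ fragδ b (n+2+2*a.size))
        ({(n, VLabel.eps, n+2), (n, VLabel.eps, n+2+2*a.size),
          (n+3, VLabel.eps, n+1), (n+2+2*a.size+1, VLabel.eps, n+1)} :
          Finset (ℕ × VLabel Sig × ℕ))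
      have h2 := Finset.card_union_le (fragδ a (n+2)) (fragδ b (n+2+2*a.size))
      have h3 := card_le_four (n, (VLabel.eps : VLabel Sig), n+2)
        (n, VLabel.eps, n+2+2*a.size) (n+3, VLabel.eps, n+1)
        (n+2+2*a.size+1, VLabel.eps, n+1)
      have h4 := iha (n+2); have h5 := ihb (n+2+2*a.size)
      simp only [fragδ, RGX.size]
      omega
  | concat a b iha ihb =>
      intro n
      have h1 := Finset.card_union_le (fragδ a (n+2) ∪ fragδ b (n+2+2*a.size))
        ({(n, VLabel.eps, n+2), (n+3, VLabel.eps, n+2+2*a.size),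
          (n+2+2*a.size+1, VLabel.eps, n+1)} : Finset (ℕ × VLabel Sig × ℕ))
      have h2 := Finset.card_union_le (fragδ a (n+2)) (fragδ b (n+2+2*a.size))
      have h3 := card_le_three (n, (VLabel.eps : VLabel Sig), n+2)
        (n+3, VLabel.eps, n+2+2*a.size) (n+2+2*a.size+1, VLabel.eps, n+1)
      have h4 := iha (n+2); have h5 := ihb (n+2+2*a.size)
      simp only [fragδ, RGX.size]
      omega
  | star a iha =>
      intro n
      have h1 := Finset.card_union_le (fragδ a (n+2))
        ({(n, VLabel.eps, n+1), (n, VLabel.eps, n+2),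
          (n+3, VLabel.eps, n+2), (n+3, VLabel.eps, n+1)} : Finset (ℕ × VLabel Sig × ℕ))
      have h3 := card_le_four (n, (VLabel.eps : VLabel Sig), n+1) (n, VLabel.eps, n+2)
        (n+3, VLabel.eps, n+2) (n+3, VLabel.eps, n+1)
      have h4 := iha (n+2)
      simp only [fragδ, RGX.size]
      omega
  | bind x a iha =>
      intro n
      have h1 := Finset.card_union_le (fragδ a (n+2))
        ({(n, VLabel.openv x, n+2), (n+3, VLabel.closev x, n+1)} :
          Finset (ℕ × VLabel Sig × ℕ))
      have h3 := card_le_two (n, (VLabel.openv x : VLabel Sig), n+2)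
        (n+3, VLabel.closev x, n+1)
      have h4 := iha (n+2)
      simp only [fragδ, RGX.size]
      omega

lemma states_card (γ : RGX Sig) : (statesOf (toVA γ)).card ≤ 2 * γ.size := by
  have hγ := size_pos γ
  have hsub : statesOf (toVA γ) ⊆ Finset.range (2 * γ.size) := by
    intro s hs
    simp only [statesOf, toVA, Finset.mem_insert, Finset.mem_union, Finset.mem_image,
      Finset.mem_singleton, Finset.mem_range] at hs ⊢
    rcases hs with rfl | (rfl | hs) | hs
    · omega
    · omega
    · obtain ⟨⟨p, l, q⟩, hm, rfl⟩ := hs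
      show p < 2 * γ.size
      have := frag_bound hm; omega
    · obtain ⟨⟨p, l, q⟩, hm, rfl⟩ := hs
      show q < 2 * γ.size
      have := frag_bound hm; omega
  have := Finset.card_le_card hsub
  simpa using this

/-! ### Variables of transition labels -/

lemma frag_label_vars {γ : RGX Sig} : ∀ {n p q : ℕ} {l : VLabel Sig},
    (p, l, q) ∈ fragδ γ n → labelVars l ⊆ γ.vars := by
  induction γ with
  | empty => intro n p q l h; simp [fragδ] at h
  | eps =>
      intro n p q l h
      simp only [fragδ, Finset.mem_singleton, Prod.mk.injEq] at h
      obtain ⟨-, rfl, -⟩ := h; simp [labelVars]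
  | letter σ =>
      intro n p q l h
      simp only [fragδ, Finset.mem_singleton, Prod.mk.injEq] at h
      obtain ⟨-, rfl, -⟩ := h; simp [labelVars]
  | union a b iha ihb =>
      intro n p q l h
      simp only [fragδ, Finset.mem_union, Finset.mem_insert, Finset.mem_singleton] at h
      rcases h with (h | h) | h | h | h | h
      · exact (iha h).trans Finset.subset_union_left
      · exact (ihb h).trans Finset.subset_union_right
      all_goals (simp only [Prod.mk.injEq] at h; obtain ⟨-, rfl, -⟩ := h; simp [labelVars])
  | concat a b iha ihb =>
      intro n p q l h
      simp only [fragδ, Finset.mem_union, Finset.mem_insert, Finset.mem_singleton] at h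
      rcases h with (h | h) | h | h | h
      · exact (iha h).trans Finset.subset_union_left
      · exact (ihb h).trans Finset.subset_union_right
      all_goals (simp only [Prod.mk.injEq] at h; obtain ⟨-, rfl, -⟩ := h; simp [labelVars])
  | star a iha =>
      intro n p q l h
      simp only [fragδ, Finset.mem_union, Finset.mem_insert, Finset.mem_singleton] at h
      rcases h with h | h | h | h | h
      · exact iha h
      all_goals (simp only [Prod.mk.injEq] at h; obtain ⟨-, rfl, -⟩ := h; simp [labelVars])
  | bind x a iha =>
      intro n p q l h
      simp only [fragδ, Finset.mem_union, Finset.mem_insert, Finset.mem_singleton] at h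
      rcases h with h | h | h
      · exact (iha h).trans (Finset.subset_insert x a.vars)
      all_goals
        simp only [Prod.mk.injEq] at h
        obtain ⟨-, rfl, -⟩ := h
        simp [labelVars, RGX.vars]

lemma frag_open_var {γ : RGX Sig} {n p q x : ℕ}
    (h : (p, VLabel.openv x, q) ∈ fragδ γ n) : x ∈ γ.vars :=
  frag_label_vars h (by simp [labelVars])

lemma frag_close_var {γ : RGX Sig} {n p q x : ℕ}
    (h : (p, VLabel.closev x, q) ∈ fragδ γ n) : x ∈ γ.vars :=
  frag_label_vars h (by simp [labelVars])

/-! ### Unique targets for synchronized variables -/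

lemma frag_unique : ∀ (γ : RGX Sig), γ.Sequential → ∀ x : ℕ, γ.SyncFor x → ∀ n,
    (∃ qt, ∀ p q, (p, VLabel.openv x, q) ∈ fragδ γ n → q = qt) ∧
    (∃ qt, ∀ p q, (p, VLabel.closev x, q) ∈ fragδ γ n → q = qt) := by
  intro γ
  induction γ with
  | empty => intro _ x _ n; exact ⟨⟨0, by simp [fragδ]⟩, ⟨0, by simp [fragδ]⟩⟩
  | eps =>
      intro _ x _ n
      refine ⟨⟨0, fun p q h => ?_⟩, ⟨0, fun p q h => ?_⟩⟩ <;>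
      · simp only [fragδ, Finset.mem_singleton, Prod.mk.injEq] at h
        obtain ⟨-, h2, -⟩ := h
        simp at h2
  | letter σ =>
      intro _ x _ n
      refine ⟨⟨0, fun p q h => ?_⟩, ⟨0, fun p q h => ?_⟩⟩ <;>
      · simp only [fragδ, Finset.mem_singleton, Prod.mk.injEq] at h
        obtain ⟨-, h2, -⟩ := h
        simp at h2
  | union a b iha ihb =>
      intro hseq x hsync n
      have hxa : x ∉ a.vars := hsync.1.1
      have hxb : x ∉ b.vars := hsync.1.2
      constructor
      · refine ⟨0, fun p q h => ?_⟩
        exfalso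
        simp only [fragδ, Finset.mem_union, Finset.mem_insert, Finset.mem_singleton] at h
        rcases h with (h | h) | h | h | h | h
        · exact hxa (frag_open_var h)
        · exact hxb (frag_open_var h)
        all_goals (simp only [Prod.mk.injEq] at h; obtain ⟨-, h2, -⟩ := h; simp at h2)
      · refine ⟨0, fun p q h => ?_⟩
        exfalso
        simp only [fragδ, Finset.mem_union, Finset.mem_insert, Finset.mem_singleton] at h
        rcases h with (h | h) | h | h | h | h
        · exact hxa (frag_close_var h)
        · exact hxb (frag_close_var h)
        all_goals (simp only [Prod.mk.injEq] at h; obtain ⟨-, h2, -⟩ := h; simp at h2)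
  | concat a b iha ihb =>
      intro hseq x hsync n
      by_cases hx : x ∈ a.vars
      · have hxb : x ∉ b.vars := Finset.disjoint_left.1 hseq.2.2 hx
        obtain ⟨⟨qo, hqo⟩, ⟨qc, hqc⟩⟩ := iha hseq.1 x hsync.1 (n+2)
        constructor
        · refine ⟨qo, fun p q h => ?_⟩
          simp only [fragδ, Finset.mem_union, Finset.mem_insert, Finset.mem_singleton] at h
          rcases h with (h | h) | h | h | h
          · exact hqo _ _ h
          · exact absurd (frag_open_var h) hxb
          all_goals (simp only [Prod.mk.injEq] at h; obtain ⟨-, h2, -⟩ := h; simp at h2)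
        · refine ⟨qc, fun p q h => ?_⟩
          simp only [fragδ, Finset.mem_union, Finset.mem_insert, Finset.mem_singleton] at h
          rcases h with (h | h) | h | h | h
          · exact hqc _ _ h
          · exact absurd (frag_close_var h) hxb
          all_goals (simp only [Prod.mk.injEq] at h; obtain ⟨-, h2, -⟩ := h; simp at h2)
      · obtain ⟨⟨qo, hqo⟩, ⟨qc, hqc⟩⟩ := ihb hseq.2.1 x hsync.2 (n+2+2*a.size)
        constructor
        · refine ⟨qo, fun p q h => ?_⟩
          simp only [fragδ, Finset.mem_union, Finset.mem_insert, Finset.mem_singleton] at h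
          rcases h with (h | h) | h | h | h
          · exact absurd (frag_open_var h) hx
          · exact hqo _ _ h
          all_goals (simp only [Prod.mk.injEq] at h; obtain ⟨-, h2, -⟩ := h; simp at h2)
        · refine ⟨qc, fun p q h => ?_⟩
          simp only [fragδ, Finset.mem_union, Finset.mem_insert, Finset.mem_singleton] at h
          rcases h with (h | h) | h | h | h
          · exact absurd (frag_close_var h) hx
          · exact hqc _ _ h
          all_goals (simp only [Prod.mk.injEq] at h; obtain ⟨-, h2, -⟩ := h; simp at h2)
  | star a iha =>
      intro hseq x hsync n
      have hva : a.vars = ∅ := hseq.2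
      constructor
      · refine ⟨0, fun p q h => ?_⟩
        exfalso
        simp only [fragδ, Finset.mem_union, Finset.mem_insert, Finset.mem_singleton] at h
        rcases h with h | h | h | h | h
        · have := frag_open_var h; rw [hva] at this; simp at this
        all_goals (simp only [Prod.mk.injEq] at h; obtain ⟨-, h2, -⟩ := h; simp at h2)
      · refine ⟨0, fun p q h => ?_⟩
        exfalso
        simp only [fragδ, Finset.mem_union, Finset.mem_insert, Finset.mem_singleton] at h
        rcases h with h | h | h | h | h
        · have := frag_close_var h; rw [hva] at this; simp at this
        all_goals (simp only [Prod.mk.injEq] at h; obtain ⟨-, h2, -⟩ := h; simp at h2)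
  | bind y a iha =>
      intro hseq x hsync n
      have hyv : y ∉ a.vars := hseq.2
      by_cases hxy : x = y
      · subst hxy
        constructor
        · refine ⟨n+2, fun p q h => ?_⟩
          simp only [fragδ, Finset.mem_union, Finset.mem_insert, Finset.mem_singleton] at h
          rcases h with h | h | h
          · exact absurd (frag_open_var h) hyv
          · simp only [Prod.mk.injEq] at h; exact h.2.2
          · simp only [Prod.mk.injEq] at h; obtain ⟨-, h2, -⟩ := h; simp at h2
        · refine ⟨n+1, fun p q h => ?_⟩
          simp only [fragδ, Finset.mem_union, Finset.mem_insert, Finset.mem_singleton] at h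
          rcases h with h | h | h
          · exact absurd (frag_close_var h) hyv
          · simp only [Prod.mk.injEq] at h; obtain ⟨-, h2, -⟩ := h; simp at h2
          · simp only [Prod.mk.injEq] at h; exact h.2.2
      · obtain ⟨⟨qo, hqo⟩, ⟨qc, hqc⟩⟩ := iha hseq.1 x hsync (n+2)
        constructor
        · refine ⟨qo, fun p q h => ?_⟩
          simp only [fragδ, Finset.mem_union, Finset.mem_insert, Finset.mem_singleton] at h
          rcases h with h | h | h
          · exact hqo _ _ h
          all_goals
            simp only [Prod.mk.injEq] at h
            obtain ⟨-, h2, -⟩ := h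
            simp [hxy] at h2
        · refine ⟨qc, fun p q h => ?_⟩
          simp only [fragδ, Finset.mem_union, Finset.mem_insert, Finset.mem_singleton] at h
          rcases h with h | h | h
          · exact hqc _ _ h
          all_goals
            simp only [Prod.mk.injEq] at h
            obtain ⟨-, h2, -⟩ := h
            simp [hxy] at h2

lemma tra_sync_mem {x : ℕ} {γ : RGX Sig} {ls : List (VLabel Sig)} (h : TrA γ ls) :
    γ.Sequential → γ.SyncFor x → x ∈ γ.vars →
    (VLabel.openv x) ∈ ls ∧ (VLabel.closev x) ∈ ls := by
  induction h with
  | eps => intro _ _ hx; simp [RGX.vars] at hx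
  | letter σ => intro _ _ hx; simp [RGX.vars] at hx
  | unionL h ih =>
      intro hseq hsync hx
      exfalso
      rcases Finset.mem_union.1 hx with hx | hx
      · exact hsync.1.1 hx
      · exact hsync.1.2 hx
  | unionR h ih =>
      intro hseq hsync hx
      exfalso
      rcases Finset.mem_union.1 hx with hx | hx
      · exact hsync.1.1 hx
      · exact hsync.1.2 hx
  | concat h1 h2 ih1 ih2 =>
      intro hseq hsync hx
      rcases Finset.mem_union.1 hx with hx | hx
      · have := ih1 hseq.1 hsync.1 hx
        exact ⟨by simp [this.1], by simp [this.2]⟩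
      · have := ih2 hseq.2.1 hsync.2 hx
        exact ⟨by simp [this.1], by simp [this.2]⟩
  | starNil =>
      rename_i a
      intro hseq _ hx
      have hx' : x ∈ a.vars := hx
      rw [hseq.2] at hx'
      simp at hx'
  | starCons h1 h2 ih1 ih2 =>
      rename_i a ls1 ls2
      intro hseq _ hx
      have hx' : x ∈ a.vars := hx
      rw [hseq.2] at hx'
      simp at hx'
  | bind h ih =>
      rename_i y a ls'
      intro hseq hsync hx
      by_cases hxy : x = y
      · subst hxy
        exact ⟨by simp, by simp⟩
      · have hx' : x ∈ a.vars := by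
          rcases Finset.mem_insert.1 hx with h' | h'
          · exact absurd h' hxy
          · exact h'
        have := ih hseq.1 hsync hx'
        exact ⟨by simp [this.1], by simp [this.2]⟩


theorem statement16 :
    ∃ c : ℕ, ∀ (γ : RGX Sig) (X : Finset ℕ), γ.Sequential → (∀ x ∈ X, γ.SyncFor x) →
      ∃ A : VA Sig, A.Sequential ∧ (∀ x ∈ X, SyncForVA A x) ∧
        (∀ d : List Sig, vaSem A d = rgxSem γ d) ∧
        (statesOf A).card ≤ c * γ.size ∧ A.δ.card ≤ c * γ.size := by
  refine ⟨4, ?_⟩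
  intro γ X hseq hsync
  refine ⟨toVA γ, ?_, ?_, ?_, ?_, ?_⟩
  · -- the VA is sequential
    intro ls hacc
    exact good_valid (tra_good ((accepts_iff γ ls).1 hacc) hseq)
  · -- the VA is synchronized for X
    intro x hx
    have hsx := hsync x hx
    obtain ⟨ho, hc⟩ := frag_unique γ hseq x hsx 0
    refine ⟨ho, hc, ?_⟩
    by_cases hxv : x ∈ γ.vars
    · exact Or.inl (fun ls hacc => tra_sync_mem ((accepts_iff γ ls).1 hacc) hseq hsx hxv)
    · refine Or.inr (fun ls hacc => ?_)
      obtain ⟨qf, hp, -⟩ := hacc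
      have hpd := (pathfrom_iff_pathd _ _ _ _).1 hp
      constructor
      · intro hm
        obtain ⟨p', q', hmem⟩ := hpd.labels_mem _ hm
        exact hxv (frag_open_var hmem)
      · intro hm
        obtain ⟨p', q', hmem⟩ := hpd.labels_mem _ hm
        exact hxv (frag_close_var hmem)
  · -- semantics agree
    intro d
    ext μ
    simp only [vaSem, rgxSem, Set.mem_setOf_eq]
    constructor
    · rintro ⟨ls, hacc, hread, hval, rfl⟩
      have ht := (accepts_iff γ ls).1 hacc
      have hlen : lcnt ls = d.length := by rw [← readWord_length, hread]
      have hm := tra_sound ht hseq d 1 (le_refl 1) (by omega)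
        (fun k s hk => by rw [hread] at hk; simpa using hk)
      rw [runMapping_eq_tMap, show d.length + 1 = 1 + lcnt ls by omega]
      exact hm
    · intro hm
      obtain ⟨ls, ht, hl, hr, hμ⟩ := tra_complete hm hseq
      refine ⟨ls, (accepts_iff γ ls).2 ht, ?_, good_valid (tra_good ht hseq), by
        rw [runMapping_eq_tMap]; exact hμ⟩
      rw [hr]
      simp
  · have := states_card γ
    omega
  · exact frag_card γ 0


end Spanners
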